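/- Let F(t) ∈ ℤ⟦t⟧ be the power series whose coefficient of t^n is the number of lists of n integers, each belonging to {±2, ±3, ±4, ±5, ±6, ±7, ±8}, all of whose prefix sums lie in the interval [−8, 8]. Then F(t)·(1 − 4t − 59t² − 77t³ + 170t⁴ + 234t⁵ − 92t⁶ − 142t⁷ − 4t⁸ + 6t⁹) = 1 + 10t + 13t² − 37t³ − 40t⁴ + 28t⁵ + 26t⁶ − 2t⁷ as an identity in ℤ⟦t⟧. -/

import Mathlib

open PowerSeries

/-- The generating function for close football games: the coefficient of `t^n`
is the number of lists of `n` integers, each with absolute value in `[2, 8]`,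
all of whose prefix sums lie in `[-8, 8]`. -/
noncomputable def closeGameGF : PowerSeries ℤ :=
  PowerSeries.mk fun n =>
    (Nat.card {l : List ℤ //
      l.length = n ∧
      (∀ x ∈ l, 2 ≤ |x| ∧ |x| ≤ 8) ∧
      (∀ i : ℕ, -8 ≤ (l.take i).sum ∧ (l.take i).sum ≤ 8)} : ℤ)

open PowerSeries

def stepSet : Finset ℤ := {-8, -7, -6, -5, -4, -3, -2, 2, 3, 4, 5, 6, 7, 8}

def Ok (s : ℤ) (n : ℕ) (l : List ℤ) : Prop :=
  l.length = n ∧ (∀ x ∈ l, x ∈ stepSet) ∧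
    ∀ i : ℕ, -8 ≤ s + (l.take i).sum ∧ s + (l.take i).sum ≤ 8

noncomputable def cw (s : ℤ) (n : ℕ) : ℕ := Nat.card {l : List ℤ // Ok s n l}

lemma ok_high (s : ℤ) (h : 8 < s) (n : ℕ) (l : List ℤ) : ¬ Ok s n l := by
  rintro ⟨-, -, hpre⟩
  have := hpre 0
  simp at this
  omega

lemma ok_low (s : ℤ) (h : s < -8) (n : ℕ) (l : List ℤ) : ¬ Ok s n l := by
  rintro ⟨-, -, hpre⟩
  have := hpre 0
  simp at this
  omega

@[simp] lemma cw_high (s : ℤ) (h : 8 < s) (n : ℕ) : cw s n = 0 := by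
  have : IsEmpty {l : List ℤ // Ok s n l} := ⟨fun ⟨l, hl⟩ => ok_high s h n l hl⟩
  simp [cw]

@[simp] lemma cw_low (s : ℤ) (h : s < -8) (n : ℕ) : cw s n = 0 := by
  have : IsEmpty {l : List ℤ // Ok s n l} := ⟨fun ⟨l, hl⟩ => ok_low s h n l hl⟩
  simp [cw]

lemma cw_zero (s : ℤ) (h1 : -8 ≤ s) (h2 : s ≤ 8) : cw s 0 = 1 := by
  have : Unique {l : List ℤ // Ok s 0 l} := by
    refine ⟨⟨⟨[], rfl, by simp, fun i => by simp; omega⟩⟩, ?_⟩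
    rintro ⟨l, hlen, -⟩
    exact Subtype.ext (List.eq_nil_of_length_eq_zero hlen)
  exact Nat.card_unique

def stepEquiv (s : ℤ) (n : ℕ) (h1 : -8 ≤ s) (h2 : s ≤ 8) :
    {l : List ℤ // Ok s (n + 1) l} ≃ Σ d : stepSet, {l : List ℤ // Ok (s + d) n l} where
  toFun := fun ⟨l, hl⟩ =>
    match l, hl with
    | a :: t, h => ⟨⟨a, h.2.1 a (List.mem_cons_self)⟩, ⟨t, by
        obtain ⟨hlen, hmem, hpre⟩ := h
        refine ⟨by simpa using hlen, fun x hx => hmem x (List.mem_cons_of_mem a hx), fun i => ?_⟩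
        have := hpre (i + 1)
        simp only [List.take_succ_cons, List.sum_cons] at this
        constructor <;> linarith [this.1, this.2]⟩⟩
  invFun := fun ⟨⟨d, hd⟩, ⟨t, ht⟩⟩ => ⟨d :: t, by
    obtain ⟨hlen, hmem, hpre⟩ := ht
    refine ⟨by simp [hlen], ?_, fun i => ?_⟩
    · intro x hx
      rcases List.mem_cons.mp hx with rfl | hx
      · exact hd
      · exact hmem x hx
    · cases i with
      | zero => simp; omega
      | succ j =>
        have := hpre j
        simp only [List.take_succ_cons, List.sum_cons]
        constructor <;> linarith [this.1, this.2]⟩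
  left_inv := fun ⟨l, hl⟩ => by
    match l, hl with
    | a :: t, h => rfl
  right_inv := fun ⟨⟨d, hd⟩, ⟨t, ht⟩⟩ => rfl

lemma ok_finite (n : ℕ) : ∀ s : ℤ, Finite {l : List ℤ // Ok s n l} := by
  induction n with
  | zero =>
    intro s
    have : Subsingleton {l : List ℤ // Ok s 0 l} := by
      constructor
      rintro ⟨l, hl, -⟩ ⟨m, hm, -⟩
      exact Subtype.ext ((List.eq_nil_of_length_eq_zero hl).trans
        (List.eq_nil_of_length_eq_zero hm).symm)
    exact Finite.of_subsingleton
  | succ n ih =>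
    intro s
    by_cases hs : -8 ≤ s ∧ s ≤ 8
    · have : ∀ d : stepSet, Finite {l : List ℤ // Ok (s + d) n l} := fun d => ih _
      exact Finite.of_equiv _ (stepEquiv s n hs.1 hs.2).symm
    · rcases not_and_or.mp hs with h | h
      · have : IsEmpty {l : List ℤ // Ok s (n+1) l} :=
          ⟨fun ⟨l, hl⟩ => ok_low s (by omega) _ l hl⟩
        infer_instance
      · have : IsEmpty {l : List ℤ // Ok s (n+1) l} :=
          ⟨fun ⟨l, hl⟩ => ok_high s (by omega) _ l hl⟩
        infer_instance

lemma nat_card_sigma {ι : Type*} [Fintype ι] (f : ι → Type*) [∀ i, Finite (f i)] :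
    Nat.card (Σ i, f i) = ∑ i, Nat.card (f i) := by
  have : ∀ i, Fintype (f i) := fun i => Fintype.ofFinite _
  rw [Nat.card_eq_fintype_card, Fintype.card_sigma]
  exact Finset.sum_congr rfl fun i _ => (Nat.card_eq_fintype_card).symm

lemma cw_succ (s : ℤ) (h1 : -8 ≤ s) (h2 : s ≤ 8) (n : ℕ) :
    cw s (n + 1) = ∑ d ∈ stepSet, cw (s + d) n := by
  have : ∀ d : stepSet, Finite {l : List ℤ // Ok (s + d) n l} := fun d => ok_finite n _
  rw [cw, Nat.card_congr (stepEquiv s n h1 h2),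
    nat_card_sigma (fun d : stepSet => {l : List ℤ // Ok (s + ↑d) n l})]
  rw [← Finset.sum_coe_sort stepSet (fun d => cw (s + d) n)]
  rfl

lemma sum_stepSet {M : Type*} [AddCommMonoid M] (f : ℤ → M) :
    ∑ d ∈ stepSet, f d = f (-8) + f (-7) + f (-6) + f (-5) + f (-4) + f (-3)
      + f (-2) + f 2 + f 3 + f 4 + f 5 + f 6 + f 7 + f 8 := by
  rw [stepSet]
  rw [Finset.sum_insert (by decide), Finset.sum_insert (by decide),
    Finset.sum_insert (by decide), Finset.sum_insert (by decide),
    Finset.sum_insert (by decide), Finset.sum_insert (by decide),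
    Finset.sum_insert (by decide), Finset.sum_insert (by decide),
    Finset.sum_insert (by decide), Finset.sum_insert (by decide),
    Finset.sum_insert (by decide), Finset.sum_insert (by decide),
    Finset.sum_insert (by decide), Finset.sum_singleton]
  simp [add_assoc]

lemma st_m8 (n : ℕ) : cw (-8) (n + 1) = cw (-6) n + cw (-5) n + cw (-4) n + cw (-3) n + cw (-2) n + cw (-1) n + cw 0 n := by
  rw [cw_succ (-8) (by norm_num) (by norm_num), sum_stepSet]
  norm_num

lemma st_m7 (n : ℕ) : cw (-7) (n + 1) = cw (-5) n + cw (-4) n + cw (-3) n + cw (-2) n + cw (-1) n + cw 0 n + cw 1 n := by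
  rw [cw_succ (-7) (by norm_num) (by norm_num), sum_stepSet]
  norm_num

lemma st_m6 (n : ℕ) : cw (-6) (n + 1) = cw (-8) n + cw (-4) n + cw (-3) n + cw (-2) n + cw (-1) n + cw 0 n + cw 1 n + cw 2 n := by
  rw [cw_succ (-6) (by norm_num) (by norm_num), sum_stepSet]
  norm_num

lemma st_m5 (n : ℕ) : cw (-5) (n + 1) = cw (-8) n + cw (-7) n + cw (-3) n + cw (-2) n + cw (-1) n + cw 0 n + cw 1 n + cw 2 n + cw 3 n := by
  rw [cw_succ (-5) (by norm_num) (by norm_num), sum_stepSet]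
  norm_num

lemma st_m4 (n : ℕ) : cw (-4) (n + 1) = cw (-8) n + cw (-7) n + cw (-6) n + cw (-2) n + cw (-1) n + cw 0 n + cw 1 n + cw 2 n + cw 3 n + cw 4 n := by
  rw [cw_succ (-4) (by norm_num) (by norm_num), sum_stepSet]
  norm_num

lemma st_m3 (n : ℕ) : cw (-3) (n + 1) = cw (-8) n + cw (-7) n + cw (-6) n + cw (-5) n + cw (-1) n + cw 0 n + cw 1 n + cw 2 n + cw 3 n + cw 4 n + cw 5 n := by
  rw [cw_succ (-3) (by norm_num) (by norm_num), sum_stepSet]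
  norm_num

lemma st_m2 (n : ℕ) : cw (-2) (n + 1) = cw (-8) n + cw (-7) n + cw (-6) n + cw (-5) n + cw (-4) n + cw 0 n + cw 1 n + cw 2 n + cw 3 n + cw 4 n + cw 5 n + cw 6 n := by
  rw [cw_succ (-2) (by norm_num) (by norm_num), sum_stepSet]
  norm_num

lemma st_m1 (n : ℕ) : cw (-1) (n + 1) = cw (-8) n + cw (-7) n + cw (-6) n + cw (-5) n + cw (-4) n + cw (-3) n + cw 1 n + cw 2 n + cw 3 n + cw 4 n + cw 5 n + cw 6 n + cw 7 n := by
  rw [cw_succ (-1) (by norm_num) (by norm_num), sum_stepSet]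
  norm_num

lemma st_p0 (n : ℕ) : cw 0 (n + 1) = cw (-8) n + cw (-7) n + cw (-6) n + cw (-5) n + cw (-4) n + cw (-3) n + cw (-2) n + cw 2 n + cw 3 n + cw 4 n + cw 5 n + cw 6 n + cw 7 n + cw 8 n := by
  rw [cw_succ 0 (by norm_num) (by norm_num), sum_stepSet]
  norm_num

lemma st_p1 (n : ℕ) : cw 1 (n + 1) = cw (-7) n + cw (-6) n + cw (-5) n + cw (-4) n + cw (-3) n + cw (-2) n + cw (-1) n + cw 3 n + cw 4 n + cw 5 n + cw 6 n + cw 7 n + cw 8 n := by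
  rw [cw_succ 1 (by norm_num) (by norm_num), sum_stepSet]
  norm_num

lemma st_p2 (n : ℕ) : cw 2 (n + 1) = cw (-6) n + cw (-5) n + cw (-4) n + cw (-3) n + cw (-2) n + cw (-1) n + cw 0 n + cw 4 n + cw 5 n + cw 6 n + cw 7 n + cw 8 n := by
  rw [cw_succ 2 (by norm_num) (by norm_num), sum_stepSet]
  norm_num

lemma st_p3 (n : ℕ) : cw 3 (n + 1) = cw (-5) n + cw (-4) n + cw (-3) n + cw (-2) n + cw (-1) n + cw 0 n + cw 1 n + cw 5 n + cw 6 n + cw 7 n + cw 8 n := by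
  rw [cw_succ 3 (by norm_num) (by norm_num), sum_stepSet]
  norm_num

lemma st_p4 (n : ℕ) : cw 4 (n + 1) = cw (-4) n + cw (-3) n + cw (-2) n + cw (-1) n + cw 0 n + cw 1 n + cw 2 n + cw 6 n + cw 7 n + cw 8 n := by
  rw [cw_succ 4 (by norm_num) (by norm_num), sum_stepSet]
  norm_num

lemma st_p5 (n : ℕ) : cw 5 (n + 1) = cw (-3) n + cw (-2) n + cw (-1) n + cw 0 n + cw 1 n + cw 2 n + cw 3 n + cw 7 n + cw 8 n := by
  rw [cw_succ 5 (by norm_num) (by norm_num), sum_stepSet]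
  norm_num

lemma st_p6 (n : ℕ) : cw 6 (n + 1) = cw (-2) n + cw (-1) n + cw 0 n + cw 1 n + cw 2 n + cw 3 n + cw 4 n + cw 8 n := by
  rw [cw_succ 6 (by norm_num) (by norm_num), sum_stepSet]
  norm_num

lemma st_p7 (n : ℕ) : cw 7 (n + 1) = cw (-1) n + cw 0 n + cw 1 n + cw 2 n + cw 3 n + cw 4 n + cw 5 n := by
  rw [cw_succ 7 (by norm_num) (by norm_num), sum_stepSet]
  norm_num

lemma st_p8 (n : ℕ) : cw 8 (n + 1) = cw 0 n + cw 1 n + cw 2 n + cw 3 n + cw 4 n + cw 5 n + cw 6 n := by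
  rw [cw_succ 8 (by norm_num) (by norm_num), sum_stepSet]
  norm_num

lemma L2_m8 (n : ℕ) : cw (-8) (n + 2) = 7 * cw (-8) n + 6 * cw (-7) n + 5 * cw (-6) n + 4 * cw (-5) n + 4 * cw (-4) n + 4 * cw (-3) n + 4 * cw (-2) n + 4 * cw (-1) n + 5 * cw 0 n + 6 * cw 1 n + 7 * cw 2 n + 6 * cw 3 n + 5 * cw 4 n + 4 * cw 5 n + 3 * cw 6 n + 2 * cw 7 n + cw 8 n := by
  rw [show n + 2 = (n + 1) + 1 from by omega, st_m8]
  simp only [st_m6, st_m5, st_m4, st_m3, st_m2, st_m1, st_p0]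
  ring

lemma L2_m7 (n : ℕ) : cw (-7) (n + 2) = 6 * cw (-8) n + 7 * cw (-7) n + 6 * cw (-6) n + 5 * cw (-5) n + 4 * cw (-4) n + 4 * cw (-3) n + 4 * cw (-2) n + 4 * cw (-1) n + 4 * cw 0 n + 5 * cw 1 n + 6 * cw 2 n + 7 * cw 3 n + 6 * cw 4 n + 5 * cw 5 n + 4 * cw 6 n + 3 * cw 7 n + 2 * cw 8 n := by
  rw [show n + 2 = (n + 1) + 1 from by omega, st_m7]
  simp only [st_m5, st_m4, st_m3, st_m2, st_m1, st_p0, st_p1]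
  ring

lemma L2_m6 (n : ℕ) : cw (-6) (n + 2) = 5 * cw (-8) n + 6 * cw (-7) n + 8 * cw (-6) n + 7 * cw (-5) n + 6 * cw (-4) n + 5 * cw (-3) n + 5 * cw (-2) n + 5 * cw (-1) n + 5 * cw 0 n + 4 * cw 1 n + 5 * cw 2 n + 6 * cw 3 n + 7 * cw 4 n + 6 * cw 5 n + 5 * cw 6 n + 4 * cw 7 n + 3 * cw 8 n := by
  rw [show n + 2 = (n + 1) + 1 from by omega, st_m6]
  simp only [st_m8, st_m4, st_m3, st_m2, st_m1, st_p0, st_p1, st_p2]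
  ring

lemma L2_m5 (n : ℕ) : cw (-5) (n + 2) = 4 * cw (-8) n + 5 * cw (-7) n + 7 * cw (-6) n + 9 * cw (-5) n + 8 * cw (-4) n + 7 * cw (-3) n + 6 * cw (-2) n + 6 * cw (-1) n + 6 * cw 0 n + 5 * cw 1 n + 4 * cw 2 n + 5 * cw 3 n + 6 * cw 4 n + 7 * cw 5 n + 6 * cw 6 n + 5 * cw 7 n + 4 * cw 8 n := by
  rw [show n + 2 = (n + 1) + 1 from by omega, st_m5]
  simp only [st_m8, st_m7, st_m3, st_m2, st_m1, st_p0, st_p1, st_p2, st_p3]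
  ring

lemma L2_m4 (n : ℕ) : cw (-4) (n + 2) = 4 * cw (-8) n + 4 * cw (-7) n + 6 * cw (-6) n + 8 * cw (-5) n + 10 * cw (-4) n + 9 * cw (-3) n + 8 * cw (-2) n + 7 * cw (-1) n + 7 * cw 0 n + 6 * cw 1 n + 5 * cw 2 n + 4 * cw 3 n + 5 * cw 4 n + 6 * cw 5 n + 7 * cw 6 n + 6 * cw 7 n + 5 * cw 8 n := by
  rw [show n + 2 = (n + 1) + 1 from by omega, st_m4]
  simp only [st_m8, st_m7, st_m6, st_m2, st_m1, st_p0, st_p1, st_p2, st_p3, st_p4]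
  ring

lemma L2_m3 (n : ℕ) : cw (-3) (n + 2) = 4 * cw (-8) n + 4 * cw (-7) n + 5 * cw (-6) n + 7 * cw (-5) n + 9 * cw (-4) n + 11 * cw (-3) n + 10 * cw (-2) n + 9 * cw (-1) n + 8 * cw 0 n + 7 * cw 1 n + 6 * cw 2 n + 5 * cw 3 n + 4 * cw 4 n + 5 * cw 5 n + 6 * cw 6 n + 7 * cw 7 n + 6 * cw 8 n := by
  rw [show n + 2 = (n + 1) + 1 from by omega, st_m3]
  simp only [st_m8, st_m7, st_m6, st_m5, st_m1, st_p0, st_p1, st_p2, st_p3, st_p4, st_p5]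
  ring

lemma L2_m2 (n : ℕ) : cw (-2) (n + 2) = 4 * cw (-8) n + 4 * cw (-7) n + 5 * cw (-6) n + 6 * cw (-5) n + 8 * cw (-4) n + 10 * cw (-3) n + 12 * cw (-2) n + 11 * cw (-1) n + 10 * cw 0 n + 8 * cw 1 n + 7 * cw 2 n + 6 * cw 3 n + 5 * cw 4 n + 4 * cw 5 n + 5 * cw 6 n + 6 * cw 7 n + 7 * cw 8 n := by
  rw [show n + 2 = (n + 1) + 1 from by omega, st_m2]
  simp only [st_m8, st_m7, st_m6, st_m5, st_m4, st_p0, st_p1, st_p2, st_p3, st_p4, st_p5, st_p6]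
  ring

lemma L2_m1 (n : ℕ) : cw (-1) (n + 2) = 4 * cw (-8) n + 4 * cw (-7) n + 5 * cw (-6) n + 6 * cw (-5) n + 7 * cw (-4) n + 9 * cw (-3) n + 11 * cw (-2) n + 13 * cw (-1) n + 12 * cw 0 n + 10 * cw 1 n + 8 * cw 2 n + 7 * cw 3 n + 6 * cw 4 n + 5 * cw 5 n + 4 * cw 6 n + 5 * cw 7 n + 6 * cw 8 n := by
  rw [show n + 2 = (n + 1) + 1 from by omega, st_m1]
  simp only [st_m8, st_m7, st_m6, st_m5, st_m4, st_m3, st_p1, st_p2, st_p3, st_p4, st_p5, st_p6, st_p7]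
  ring

lemma L2_p0 (n : ℕ) : cw 0 (n + 2) = 5 * cw (-8) n + 4 * cw (-7) n + 5 * cw (-6) n + 6 * cw (-5) n + 7 * cw (-4) n + 8 * cw (-3) n + 10 * cw (-2) n + 12 * cw (-1) n + 14 * cw 0 n + 12 * cw 1 n + 10 * cw 2 n + 8 * cw 3 n + 7 * cw 4 n + 6 * cw 5 n + 5 * cw 6 n + 4 * cw 7 n + 5 * cw 8 n := by
  rw [show n + 2 = (n + 1) + 1 from by omega, st_p0]
  simp only [st_m8, st_m7, st_m6, st_m5, st_m4, st_m3, st_m2, st_p2, st_p3, st_p4, st_p5, st_p6, st_p7, st_p8]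
  ring

lemma L2_p1 (n : ℕ) : cw 1 (n + 2) = 6 * cw (-8) n + 5 * cw (-7) n + 4 * cw (-6) n + 5 * cw (-5) n + 6 * cw (-4) n + 7 * cw (-3) n + 8 * cw (-2) n + 10 * cw (-1) n + 12 * cw 0 n + 13 * cw 1 n + 11 * cw 2 n + 9 * cw 3 n + 7 * cw 4 n + 6 * cw 5 n + 5 * cw 6 n + 4 * cw 7 n + 4 * cw 8 n := by
  rw [show n + 2 = (n + 1) + 1 from by omega, st_p1]
  simp only [st_m7, st_m6, st_m5, st_m4, st_m3, st_m2, st_m1, st_p3, st_p4, st_p5, st_p6, st_p7, st_p8]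
  ring

lemma L2_p2 (n : ℕ) : cw 2 (n + 2) = 7 * cw (-8) n + 6 * cw (-7) n + 5 * cw (-6) n + 4 * cw (-5) n + 5 * cw (-4) n + 6 * cw (-3) n + 7 * cw (-2) n + 8 * cw (-1) n + 10 * cw 0 n + 11 * cw 1 n + 12 * cw 2 n + 10 * cw 3 n + 8 * cw 4 n + 6 * cw 5 n + 5 * cw 6 n + 4 * cw 7 n + 4 * cw 8 n := by
  rw [show n + 2 = (n + 1) + 1 from by omega, st_p2]
  simp only [st_m6, st_m5, st_m4, st_m3, st_m2, st_m1, st_p0, st_p4, st_p5, st_p6, st_p7, st_p8]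
  ring

lemma L2_p3 (n : ℕ) : cw 3 (n + 2) = 6 * cw (-8) n + 7 * cw (-7) n + 6 * cw (-6) n + 5 * cw (-5) n + 4 * cw (-4) n + 5 * cw (-3) n + 6 * cw (-2) n + 7 * cw (-1) n + 8 * cw 0 n + 9 * cw 1 n + 10 * cw 2 n + 11 * cw 3 n + 9 * cw 4 n + 7 * cw 5 n + 5 * cw 6 n + 4 * cw 7 n + 4 * cw 8 n := by
  rw [show n + 2 = (n + 1) + 1 from by omega, st_p3]
  simp only [st_m5, st_m4, st_m3, st_m2, st_m1, st_p0, st_p1, st_p5, st_p6, st_p7, st_p8]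
  ring

lemma L2_p4 (n : ℕ) : cw 4 (n + 2) = 5 * cw (-8) n + 6 * cw (-7) n + 7 * cw (-6) n + 6 * cw (-5) n + 5 * cw (-4) n + 4 * cw (-3) n + 5 * cw (-2) n + 6 * cw (-1) n + 7 * cw 0 n + 7 * cw 1 n + 8 * cw 2 n + 9 * cw 3 n + 10 * cw 4 n + 8 * cw 5 n + 6 * cw 6 n + 4 * cw 7 n + 4 * cw 8 n := by
  rw [show n + 2 = (n + 1) + 1 from by omega, st_p4]
  simp only [st_m4, st_m3, st_m2, st_m1, st_p0, st_p1, st_p2, st_p6, st_p7, st_p8]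
  ring

lemma L2_p5 (n : ℕ) : cw 5 (n + 2) = 4 * cw (-8) n + 5 * cw (-7) n + 6 * cw (-6) n + 7 * cw (-5) n + 6 * cw (-4) n + 5 * cw (-3) n + 4 * cw (-2) n + 5 * cw (-1) n + 6 * cw 0 n + 6 * cw 1 n + 6 * cw 2 n + 7 * cw 3 n + 8 * cw 4 n + 9 * cw 5 n + 7 * cw 6 n + 5 * cw 7 n + 4 * cw 8 n := by
  rw [show n + 2 = (n + 1) + 1 from by omega, st_p5]
  simp only [st_m3, st_m2, st_m1, st_p0, st_p1, st_p2, st_p3, st_p7, st_p8]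
  ring

lemma L2_p6 (n : ℕ) : cw 6 (n + 2) = 3 * cw (-8) n + 4 * cw (-7) n + 5 * cw (-6) n + 6 * cw (-5) n + 7 * cw (-4) n + 6 * cw (-3) n + 5 * cw (-2) n + 4 * cw (-1) n + 5 * cw 0 n + 5 * cw 1 n + 5 * cw 2 n + 5 * cw 3 n + 6 * cw 4 n + 7 * cw 5 n + 8 * cw 6 n + 6 * cw 7 n + 5 * cw 8 n := by
  rw [show n + 2 = (n + 1) + 1 from by omega, st_p6]
  simp only [st_m2, st_m1, st_p0, st_p1, st_p2, st_p3, st_p4, st_p8]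
  ring

lemma L2_p7 (n : ℕ) : cw 7 (n + 2) = 2 * cw (-8) n + 3 * cw (-7) n + 4 * cw (-6) n + 5 * cw (-5) n + 6 * cw (-4) n + 7 * cw (-3) n + 6 * cw (-2) n + 5 * cw (-1) n + 4 * cw 0 n + 4 * cw 1 n + 4 * cw 2 n + 4 * cw 3 n + 4 * cw 4 n + 5 * cw 5 n + 6 * cw 6 n + 7 * cw 7 n + 6 * cw 8 n := by
  rw [show n + 2 = (n + 1) + 1 from by omega, st_p7]
  simp only [st_m1, st_p0, st_p1, st_p2, st_p3, st_p4, st_p5]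
  ring

lemma L2_p8 (n : ℕ) : cw 8 (n + 2) = cw (-8) n + 2 * cw (-7) n + 3 * cw (-6) n + 4 * cw (-5) n + 5 * cw (-4) n + 6 * cw (-3) n + 7 * cw (-2) n + 6 * cw (-1) n + 5 * cw 0 n + 4 * cw 1 n + 4 * cw 2 n + 4 * cw 3 n + 4 * cw 4 n + 4 * cw 5 n + 5 * cw 6 n + 6 * cw 7 n + 7 * cw 8 n := by
  rw [show n + 2 = (n + 1) + 1 from by omega, st_p8]
  simp only [st_p0, st_p1, st_p2, st_p3, st_p4, st_p5, st_p6]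
  ring

lemma L3_m8 (n : ℕ) : cw (-8) (n + 3) = 30 * cw (-8) n + 31 * cw (-7) n + 41 * cw (-6) n + 49 * cw (-5) n + 55 * cw (-4) n + 59 * cw (-3) n + 62 * cw (-2) n + 63 * cw (-1) n + 62 * cw 0 n + 52 * cw 1 n + 45 * cw 2 n + 41 * cw 3 n + 40 * cw 4 n + 39 * cw 5 n + 38 * cw 6 n + 37 * cw 7 n + 36 * cw 8 n := by
  rw [show n + 3 = (n + 2) + 1 from by omega, st_m8]
  simp only [L2_m6, L2_m5, L2_m4, L2_m3, L2_m2, L2_m1, L2_p0]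
  ring

lemma L3_m7 (n : ℕ) : cw (-7) (n + 3) = 31 * cw (-8) n + 30 * cw (-7) n + 37 * cw (-6) n + 47 * cw (-5) n + 55 * cw (-4) n + 61 * cw (-3) n + 65 * cw (-2) n + 68 * cw (-1) n + 69 * cw 0 n + 61 * cw 1 n + 51 * cw 2 n + 44 * cw 3 n + 40 * cw 4 n + 39 * cw 5 n + 38 * cw 6 n + 37 * cw 7 n + 37 * cw 8 n := by
  rw [show n + 3 = (n + 2) + 1 from by omega, st_m7]
  simp only [L2_m5, L2_m4, L2_m3, L2_m2, L2_m1, L2_p0, L2_p1]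
  ring

lemma L3_m6 (n : ℕ) : cw (-6) (n + 3) = 41 * cw (-8) n + 37 * cw (-7) n + 40 * cw (-6) n + 46 * cw (-5) n + 56 * cw (-4) n + 64 * cw (-3) n + 70 * cw (-2) n + 74 * cw (-1) n + 78 * cw 0 n + 73 * cw 1 n + 66 * cw 2 n + 55 * cw 3 n + 47 * cw 4 n + 42 * cw 5 n + 40 * cw 6 n + 38 * cw 7 n + 38 * cw 8 n := by
  rw [show n + 3 = (n + 2) + 1 from by omega, st_m6]
  simp only [L2_m8, L2_m4, L2_m3, L2_m2, L2_m1, L2_p0, L2_p1, L2_p2]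
  ring

lemma L3_m5 (n : ℕ) : cw (-5) (n + 3) = 49 * cw (-8) n + 47 * cw (-7) n + 46 * cw (-6) n + 48 * cw (-5) n + 54 * cw (-4) n + 64 * cw (-3) n + 72 * cw (-2) n + 78 * cw (-1) n + 83 * cw 0 n + 81 * cw 1 n + 77 * cw 2 n + 69 * cw 3 n + 57 * cw 4 n + 48 * cw 5 n + 42 * cw 6 n + 39 * cw 7 n + 39 * cw 8 n := by
  rw [show n + 3 = (n + 2) + 1 from by omega, st_m5]
  simp only [L2_m8, L2_m7, L2_m3, L2_m2, L2_m1, L2_p0, L2_p1, L2_p2, L2_p3]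
  ring

lemma L3_m4 (n : ℕ) : cw (-4) (n + 3) = 55 * cw (-8) n + 55 * cw (-7) n + 56 * cw (-6) n + 54 * cw (-5) n + 56 * cw (-4) n + 62 * cw (-3) n + 72 * cw (-2) n + 80 * cw (-1) n + 87 * cw 0 n + 85 * cw 1 n + 84 * cw 2 n + 79 * cw 3 n + 70 * cw 4 n + 57 * cw 5 n + 47 * cw 6 n + 40 * cw 7 n + 40 * cw 8 n := by
  rw [show n + 3 = (n + 2) + 1 from by omega, st_m4]
  simp only [L2_m8, L2_m7, L2_m6, L2_m2, L2_m1, L2_p0, L2_p1, L2_p2, L2_p3, L2_p4]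
  ring

lemma L3_m3 (n : ℕ) : cw (-3) (n + 3) = 59 * cw (-8) n + 61 * cw (-7) n + 64 * cw (-6) n + 64 * cw (-5) n + 62 * cw (-4) n + 64 * cw (-3) n + 70 * cw (-2) n + 80 * cw (-1) n + 89 * cw 0 n + 88 * cw 1 n + 87 * cw 2 n + 85 * cw 3 n + 79 * cw 4 n + 69 * cw 5 n + 55 * cw 6 n + 44 * cw 7 n + 41 * cw 8 n := by
  rw [show n + 3 = (n + 2) + 1 from by omega, st_m3]
  simp only [L2_m8, L2_m7, L2_m6, L2_m5, L2_m1, L2_p0, L2_p1, L2_p2, L2_p3, L2_p4, L2_p5]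
  ring

lemma L3_m2 (n : ℕ) : cw (-2) (n + 3) = 62 * cw (-8) n + 65 * cw (-7) n + 70 * cw (-6) n + 72 * cw (-5) n + 72 * cw (-4) n + 70 * cw (-3) n + 72 * cw (-2) n + 78 * cw (-1) n + 89 * cw 0 n + 89 * cw 1 n + 89 * cw 2 n + 87 * cw 3 n + 84 * cw 4 n + 77 * cw 5 n + 66 * cw 6 n + 51 * cw 7 n + 45 * cw 8 n := by
  rw [show n + 3 = (n + 2) + 1 from by omega, st_m2]
  simp only [L2_m8, L2_m7, L2_m6, L2_m5, L2_m4, L2_p0, L2_p1, L2_p2, L2_p3, L2_p4, L2_p5, L2_p6]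
  ring

lemma L3_m1 (n : ℕ) : cw (-1) (n + 3) = 63 * cw (-8) n + 68 * cw (-7) n + 74 * cw (-6) n + 78 * cw (-5) n + 80 * cw (-4) n + 80 * cw (-3) n + 78 * cw (-2) n + 80 * cw (-1) n + 87 * cw 0 n + 88 * cw 1 n + 89 * cw 2 n + 88 * cw 3 n + 85 * cw 4 n + 81 * cw 5 n + 73 * cw 6 n + 61 * cw 7 n + 52 * cw 8 n := by
  rw [show n + 3 = (n + 2) + 1 from by omega, st_m1]
  simp only [L2_m8, L2_m7, L2_m6, L2_m5, L2_m4, L2_m3, L2_p1, L2_p2, L2_p3, L2_p4, L2_p5, L2_p6, L2_p7]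
  ring

lemma L3_p0 (n : ℕ) : cw 0 (n + 3) = 62 * cw (-8) n + 69 * cw (-7) n + 78 * cw (-6) n + 83 * cw (-5) n + 87 * cw (-4) n + 89 * cw (-3) n + 89 * cw (-2) n + 87 * cw (-1) n + 90 * cw 0 n + 87 * cw 1 n + 89 * cw 2 n + 89 * cw 3 n + 87 * cw 4 n + 83 * cw 5 n + 78 * cw 6 n + 69 * cw 7 n + 62 * cw 8 n := by
  rw [show n + 3 = (n + 2) + 1 from by omega, st_p0]
  simp only [L2_m8, L2_m7, L2_m6, L2_m5, L2_m4, L2_m3, L2_m2, L2_p2, L2_p3, L2_p4, L2_p5, L2_p6, L2_p7, L2_p8]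
  ring

lemma L3_p1 (n : ℕ) : cw 1 (n + 3) = 52 * cw (-8) n + 61 * cw (-7) n + 73 * cw (-6) n + 81 * cw (-5) n + 85 * cw (-4) n + 88 * cw (-3) n + 89 * cw (-2) n + 88 * cw (-1) n + 87 * cw 0 n + 80 * cw 1 n + 78 * cw 2 n + 80 * cw 3 n + 80 * cw 4 n + 78 * cw 5 n + 74 * cw 6 n + 68 * cw 7 n + 63 * cw 8 n := by
  rw [show n + 3 = (n + 2) + 1 from by omega, st_p1]
  simp only [L2_m7, L2_m6, L2_m5, L2_m4, L2_m3, L2_m2, L2_m1, L2_p3, L2_p4, L2_p5, L2_p6, L2_p7, L2_p8]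
  ring

lemma L3_p2 (n : ℕ) : cw 2 (n + 3) = 45 * cw (-8) n + 51 * cw (-7) n + 66 * cw (-6) n + 77 * cw (-5) n + 84 * cw (-4) n + 87 * cw (-3) n + 89 * cw (-2) n + 89 * cw (-1) n + 89 * cw 0 n + 78 * cw 1 n + 72 * cw 2 n + 70 * cw 3 n + 72 * cw 4 n + 72 * cw 5 n + 70 * cw 6 n + 65 * cw 7 n + 62 * cw 8 n := by
  rw [show n + 3 = (n + 2) + 1 from by omega, st_p2]
  simp only [L2_m6, L2_m5, L2_m4, L2_m3, L2_m2, L2_m1, L2_p0, L2_p4, L2_p5, L2_p6, L2_p7, L2_p8]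
  ring

lemma L3_p3 (n : ℕ) : cw 3 (n + 3) = 41 * cw (-8) n + 44 * cw (-7) n + 55 * cw (-6) n + 69 * cw (-5) n + 79 * cw (-4) n + 85 * cw (-3) n + 87 * cw (-2) n + 88 * cw (-1) n + 89 * cw 0 n + 80 * cw 1 n + 70 * cw 2 n + 64 * cw 3 n + 62 * cw 4 n + 64 * cw 5 n + 64 * cw 6 n + 61 * cw 7 n + 59 * cw 8 n := by
  rw [show n + 3 = (n + 2) + 1 from by omega, st_p3]
  simp only [L2_m5, L2_m4, L2_m3, L2_m2, L2_m1, L2_p0, L2_p1, L2_p5, L2_p6, L2_p7, L2_p8]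
  ring

lemma L3_p4 (n : ℕ) : cw 4 (n + 3) = 40 * cw (-8) n + 40 * cw (-7) n + 47 * cw (-6) n + 57 * cw (-5) n + 70 * cw (-4) n + 79 * cw (-3) n + 84 * cw (-2) n + 85 * cw (-1) n + 87 * cw 0 n + 80 * cw 1 n + 72 * cw 2 n + 62 * cw 3 n + 56 * cw 4 n + 54 * cw 5 n + 56 * cw 6 n + 55 * cw 7 n + 55 * cw 8 n := by
  rw [show n + 3 = (n + 2) + 1 from by omega, st_p4]
  simp only [L2_m4, L2_m3, L2_m2, L2_m1, L2_p0, L2_p1, L2_p2, L2_p6, L2_p7, L2_p8]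
  ring

lemma L3_p5 (n : ℕ) : cw 5 (n + 3) = 39 * cw (-8) n + 39 * cw (-7) n + 42 * cw (-6) n + 48 * cw (-5) n + 57 * cw (-4) n + 69 * cw (-3) n + 77 * cw (-2) n + 81 * cw (-1) n + 83 * cw 0 n + 78 * cw 1 n + 72 * cw 2 n + 64 * cw 3 n + 54 * cw 4 n + 48 * cw 5 n + 46 * cw 6 n + 47 * cw 7 n + 49 * cw 8 n := by
  rw [show n + 3 = (n + 2) + 1 from by omega, st_p5]
  simp only [L2_m3, L2_m2, L2_m1, L2_p0, L2_p1, L2_p2, L2_p3, L2_p7, L2_p8]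
  ring

lemma L3_p6 (n : ℕ) : cw 6 (n + 3) = 38 * cw (-8) n + 38 * cw (-7) n + 40 * cw (-6) n + 42 * cw (-5) n + 47 * cw (-4) n + 55 * cw (-3) n + 66 * cw (-2) n + 73 * cw (-1) n + 78 * cw 0 n + 74 * cw 1 n + 70 * cw 2 n + 64 * cw 3 n + 56 * cw 4 n + 46 * cw 5 n + 40 * cw 6 n + 37 * cw 7 n + 41 * cw 8 n := by
  rw [show n + 3 = (n + 2) + 1 from by omega, st_p6]
  simp only [L2_m2, L2_m1, L2_p0, L2_p1, L2_p2, L2_p3, L2_p4, L2_p8]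
  ring

lemma L3_p7 (n : ℕ) : cw 7 (n + 3) = 37 * cw (-8) n + 37 * cw (-7) n + 38 * cw (-6) n + 39 * cw (-5) n + 40 * cw (-4) n + 44 * cw (-3) n + 51 * cw (-2) n + 61 * cw (-1) n + 69 * cw 0 n + 68 * cw 1 n + 65 * cw 2 n + 61 * cw 3 n + 55 * cw 4 n + 47 * cw 5 n + 37 * cw 6 n + 30 * cw 7 n + 31 * cw 8 n := by
  rw [show n + 3 = (n + 2) + 1 from by omega, st_p7]
  simp only [L2_m1, L2_p0, L2_p1, L2_p2, L2_p3, L2_p4, L2_p5]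
  ring

lemma L3_p8 (n : ℕ) : cw 8 (n + 3) = 36 * cw (-8) n + 37 * cw (-7) n + 38 * cw (-6) n + 39 * cw (-5) n + 40 * cw (-4) n + 41 * cw (-3) n + 45 * cw (-2) n + 52 * cw (-1) n + 62 * cw 0 n + 63 * cw 1 n + 62 * cw 2 n + 59 * cw 3 n + 55 * cw 4 n + 49 * cw 5 n + 41 * cw 6 n + 31 * cw 7 n + 30 * cw 8 n := by
  rw [show n + 3 = (n + 2) + 1 from by omega, st_p8]
  simp only [L2_p0, L2_p1, L2_p2, L2_p3, L2_p4, L2_p5, L2_p6]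
  ring

lemma L4_m8 (n : ℕ) : cw (-8) (n + 4) = 391 * cw (-8) n + 402 * cw (-7) n + 428 * cw (-6) n + 445 * cw (-5) n + 467 * cw (-4) n + 493 * cw (-3) n + 523 * cw (-2) n + 557 * cw (-1) n + 603 * cw 0 n + 591 * cw 1 n + 581 * cw 2 n + 552 * cw 3 n + 509 * cw 4 n + 457 * cw 5 n + 401 * cw 6 n + 342 * cw 7 n + 317 * cw 8 n := by
  rw [show n + 4 = (n + 3) + 1 from by omega, st_m8]
  simp only [L3_m6, L3_m5, L3_m4, L3_m3, L3_m2, L3_m1, L3_p0]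
  ring

lemma L4_m7 (n : ℕ) : cw (-7) (n + 4) = 402 * cw (-8) n + 426 * cw (-7) n + 461 * cw (-6) n + 480 * cw (-5) n + 496 * cw (-4) n + 517 * cw (-3) n + 542 * cw (-2) n + 571 * cw (-1) n + 612 * cw 0 n + 598 * cw 1 n + 593 * cw 2 n + 577 * cw 3 n + 542 * cw 4 n + 493 * cw 5 n + 435 * cw 6 n + 372 * cw 7 n + 342 * cw 8 n := by
  rw [show n + 4 = (n + 3) + 1 from by omega, st_m7]
  simp only [L3_m5, L3_m4, L3_m3, L3_m2, L3_m1, L3_p0, L3_p1]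
  ring

lemma L4_m6 (n : ℕ) : cw (-6) (n + 4) = 428 * cw (-8) n + 461 * cw (-7) n + 522 * cw (-6) n + 558 * cw (-5) n + 581 * cw (-4) n + 599 * cw (-3) n + 621 * cw (-2) n + 645 * cw (-1) n + 680 * cw 0 n + 647 * cw 1 n + 633 * cw 2 n + 619 * cw 3 n + 597 * cw 4 n + 556 * cw 5 n + 501 * cw 6 n + 435 * cw 7 n + 401 * cw 8 n := by
  rw [show n + 4 = (n + 3) + 1 from by omega, st_m6]
  simp only [L3_m8, L3_m4, L3_m3, L3_m2, L3_m1, L3_p0, L3_p1, L3_p2]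
  ring

lemma L4_m5 (n : ℕ) : cw (-5) (n + 4) = 445 * cw (-8) n + 480 * cw (-7) n + 558 * cw (-6) n + 620 * cw (-5) n + 659 * cw (-4) n + 683 * cw (-3) n + 701 * cw (-2) n + 721 * cw (-1) n + 751 * cw 0 n + 703 * cw 1 n + 670 * cw 2 n + 648 * cw 3 n + 629 * cw 4 n + 602 * cw 5 n + 556 * cw 6 n + 493 * cw 7 n + 457 * cw 8 n := by
  rw [show n + 4 = (n + 3) + 1 from by omega, st_m5]
  simp only [L3_m8, L3_m7, L3_m3, L3_m2, L3_m1, L3_p0, L3_p1, L3_p2, L3_p3]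
  ring

lemma L4_m4 (n : ℕ) : cw (-4) (n + 4) = 467 * cw (-8) n + 496 * cw (-7) n + 581 * cw (-6) n + 659 * cw (-5) n + 723 * cw (-4) n + 762 * cw (-3) n + 785 * cw (-2) n + 800 * cw (-1) n + 827 * cw 0 n + 768 * cw 1 n + 721 * cw 2 n + 680 * cw 3 n + 653 * cw 4 n + 629 * cw 5 n + 597 * cw 6 n + 542 * cw 7 n + 509 * cw 8 n := by
  rw [show n + 4 = (n + 3) + 1 from by omega, st_m4]
  simp only [L3_m8, L3_m7, L3_m6, L3_m2, L3_m1, L3_p0, L3_p1, L3_p2, L3_p3, L3_p4]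
  ring

lemma L4_m3 (n : ℕ) : cw (-3) (n + 4) = 493 * cw (-8) n + 517 * cw (-7) n + 599 * cw (-6) n + 683 * cw (-5) n + 762 * cw (-4) n + 825 * cw (-3) n + 862 * cw (-2) n + 881 * cw (-1) n + 904 * cw 0 n + 838 * cw 1 n + 781 * cw 2 n + 726 * cw 3 n + 680 * cw 4 n + 648 * cw 5 n + 619 * cw 6 n + 577 * cw 7 n + 552 * cw 8 n := by
  rw [show n + 4 = (n + 3) + 1 from by omega, st_m3]
  simp only [L3_m8, L3_m7, L3_m6, L3_m5, L3_m1, L3_p0, L3_p1, L3_p2, L3_p3, L3_p4, L3_p5]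
  ring

lemma L4_m2 (n : ℕ) : cw (-2) (n + 4) = 523 * cw (-8) n + 542 * cw (-7) n + 621 * cw (-6) n + 701 * cw (-5) n + 785 * cw (-4) n + 862 * cw (-3) n + 922 * cw (-2) n + 954 * cw (-1) n + 982 * cw 0 n + 909 * cw 1 n + 846 * cw 2 n + 781 * cw 3 n + 721 * cw 4 n + 670 * cw 5 n + 633 * cw 6 n + 593 * cw 7 n + 581 * cw 8 n := by
  rw [show n + 4 = (n + 3) + 1 from by omega, st_m2]
  simp only [L3_m8, L3_m7, L3_m6, L3_m5, L3_m4, L3_p0, L3_p1, L3_p2, L3_p3, L3_p4, L3_p5, L3_p6]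
  ring

lemma L4_m1 (n : ℕ) : cw (-1) (n + 4) = 557 * cw (-8) n + 571 * cw (-7) n + 645 * cw (-6) n + 721 * cw (-5) n + 800 * cw (-4) n + 881 * cw (-3) n + 954 * cw (-2) n + 1008 * cw (-1) n + 1050 * cw 0 n + 978 * cw 1 n + 909 * cw 2 n + 838 * cw 3 n + 768 * cw 4 n + 703 * cw 5 n + 647 * cw 6 n + 598 * cw 7 n + 591 * cw 8 n := by
  rw [show n + 4 = (n + 3) + 1 from by omega, st_m1]
  simp only [L3_m8, L3_m7, L3_m6, L3_m5, L3_m4, L3_m3, L3_p1, L3_p2, L3_p3, L3_p4, L3_p5, L3_p6, L3_p7]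
  ring

lemma L4_p0 (n : ℕ) : cw 0 (n + 4) = 603 * cw (-8) n + 612 * cw (-7) n + 680 * cw (-6) n + 751 * cw (-5) n + 827 * cw (-4) n + 904 * cw (-3) n + 982 * cw (-2) n + 1050 * cw (-1) n + 1114 * cw 0 n + 1050 * cw 1 n + 982 * cw 2 n + 904 * cw 3 n + 827 * cw 4 n + 751 * cw 5 n + 680 * cw 6 n + 612 * cw 7 n + 603 * cw 8 n := by
  rw [show n + 4 = (n + 3) + 1 from by omega, st_p0]
  simp only [L3_m8, L3_m7, L3_m6, L3_m5, L3_m4, L3_m3, L3_m2, L3_p2, L3_p3, L3_p4, L3_p5, L3_p6, L3_p7, L3_p8]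
  ring

lemma L4_p1 (n : ℕ) : cw 1 (n + 4) = 591 * cw (-8) n + 598 * cw (-7) n + 647 * cw (-6) n + 703 * cw (-5) n + 768 * cw (-4) n + 838 * cw (-3) n + 909 * cw (-2) n + 978 * cw (-1) n + 1050 * cw 0 n + 1008 * cw 1 n + 954 * cw 2 n + 881 * cw 3 n + 800 * cw 4 n + 721 * cw 5 n + 645 * cw 6 n + 571 * cw 7 n + 557 * cw 8 n := by
  rw [show n + 4 = (n + 3) + 1 from by omega, st_p1]
  simp only [L3_m7, L3_m6, L3_m5, L3_m4, L3_m3, L3_m2, L3_m1, L3_p3, L3_p4, L3_p5, L3_p6, L3_p7, L3_p8]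
  ring

lemma L4_p2 (n : ℕ) : cw 2 (n + 4) = 581 * cw (-8) n + 593 * cw (-7) n + 633 * cw (-6) n + 670 * cw (-5) n + 721 * cw (-4) n + 781 * cw (-3) n + 846 * cw (-2) n + 909 * cw (-1) n + 982 * cw 0 n + 954 * cw 1 n + 922 * cw 2 n + 862 * cw 3 n + 785 * cw 4 n + 701 * cw 5 n + 621 * cw 6 n + 542 * cw 7 n + 523 * cw 8 n := by
  rw [show n + 4 = (n + 3) + 1 from by omega, st_p2]
  simp only [L3_m6, L3_m5, L3_m4, L3_m3, L3_m2, L3_m1, L3_p0, L3_p4, L3_p5, L3_p6, L3_p7, L3_p8]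
  ring

lemma L4_p3 (n : ℕ) : cw 3 (n + 4) = 552 * cw (-8) n + 577 * cw (-7) n + 619 * cw (-6) n + 648 * cw (-5) n + 680 * cw (-4) n + 726 * cw (-3) n + 781 * cw (-2) n + 838 * cw (-1) n + 904 * cw 0 n + 881 * cw 1 n + 862 * cw 2 n + 825 * cw 3 n + 762 * cw 4 n + 683 * cw 5 n + 599 * cw 6 n + 517 * cw 7 n + 493 * cw 8 n := by
  rw [show n + 4 = (n + 3) + 1 from by omega, st_p3]
  simp only [L3_m5, L3_m4, L3_m3, L3_m2, L3_m1, L3_p0, L3_p1, L3_p5, L3_p6, L3_p7, L3_p8]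
  ring

lemma L4_p4 (n : ℕ) : cw 4 (n + 4) = 509 * cw (-8) n + 542 * cw (-7) n + 597 * cw (-6) n + 629 * cw (-5) n + 653 * cw (-4) n + 680 * cw (-3) n + 721 * cw (-2) n + 768 * cw (-1) n + 827 * cw 0 n + 800 * cw 1 n + 785 * cw 2 n + 762 * cw 3 n + 723 * cw 4 n + 659 * cw 5 n + 581 * cw 6 n + 496 * cw 7 n + 467 * cw 8 n := by
  rw [show n + 4 = (n + 3) + 1 from by omega, st_p4]
  simp only [L3_m4, L3_m3, L3_m2, L3_m1, L3_p0, L3_p1, L3_p2, L3_p6, L3_p7, L3_p8]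
  ring

lemma L4_p5 (n : ℕ) : cw 5 (n + 4) = 457 * cw (-8) n + 493 * cw (-7) n + 556 * cw (-6) n + 602 * cw (-5) n + 629 * cw (-4) n + 648 * cw (-3) n + 670 * cw (-2) n + 703 * cw (-1) n + 751 * cw 0 n + 721 * cw 1 n + 701 * cw 2 n + 683 * cw 3 n + 659 * cw 4 n + 620 * cw 5 n + 558 * cw 6 n + 480 * cw 7 n + 445 * cw 8 n := by
  rw [show n + 4 = (n + 3) + 1 from by omega, st_p5]
  simp only [L3_m3, L3_m2, L3_m1, L3_p0, L3_p1, L3_p2, L3_p3, L3_p7, L3_p8]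
  ring

lemma L4_p6 (n : ℕ) : cw 6 (n + 4) = 401 * cw (-8) n + 435 * cw (-7) n + 501 * cw (-6) n + 556 * cw (-5) n + 597 * cw (-4) n + 619 * cw (-3) n + 633 * cw (-2) n + 647 * cw (-1) n + 680 * cw 0 n + 645 * cw 1 n + 621 * cw 2 n + 599 * cw 3 n + 581 * cw 4 n + 558 * cw 5 n + 522 * cw 6 n + 461 * cw 7 n + 428 * cw 8 n := by
  rw [show n + 4 = (n + 3) + 1 from by omega, st_p6]
  simp only [L3_m2, L3_m1, L3_p0, L3_p1, L3_p2, L3_p3, L3_p4, L3_p8]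
  ring

lemma L4_p7 (n : ℕ) : cw 7 (n + 4) = 342 * cw (-8) n + 372 * cw (-7) n + 435 * cw (-6) n + 493 * cw (-5) n + 542 * cw (-4) n + 577 * cw (-3) n + 593 * cw (-2) n + 598 * cw (-1) n + 612 * cw 0 n + 571 * cw 1 n + 542 * cw 2 n + 517 * cw 3 n + 496 * cw 4 n + 480 * cw 5 n + 461 * cw 6 n + 426 * cw 7 n + 402 * cw 8 n := by
  rw [show n + 4 = (n + 3) + 1 from by omega, st_p7]
  simp only [L3_m1, L3_p0, L3_p1, L3_p2, L3_p3, L3_p4, L3_p5]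
  ring

lemma L4_p8 (n : ℕ) : cw 8 (n + 4) = 317 * cw (-8) n + 342 * cw (-7) n + 401 * cw (-6) n + 457 * cw (-5) n + 509 * cw (-4) n + 552 * cw (-3) n + 581 * cw (-2) n + 591 * cw (-1) n + 603 * cw 0 n + 557 * cw 1 n + 523 * cw 2 n + 493 * cw 3 n + 467 * cw 4 n + 445 * cw 5 n + 428 * cw 6 n + 402 * cw 7 n + 391 * cw 8 n := by
  rw [show n + 4 = (n + 3) + 1 from by omega, st_p8]
  simp only [L3_p0, L3_p1, L3_p2, L3_p3, L3_p4, L3_p5, L3_p6]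
  ring

lemma L5_m8 (n : ℕ) : cw (-8) (n + 5) = 3516 * cw (-8) n + 3679 * cw (-7) n + 4206 * cw (-6) n + 4693 * cw (-5) n + 5137 * cw (-4) n + 5516 * cw (-3) n + 5827 * cw (-2) n + 6059 * cw (-1) n + 6308 * cw 0 n + 5893 * cw 1 n + 5542 * cw 2 n + 5196 * cw 3 n + 4875 * cw 4 n + 4559 * cw 5 n + 4233 * cw 6 n + 3850 * cw 7 n + 3694 * cw 8 n := by
  rw [show n + 5 = (n + 4) + 1 from by omega, st_m8]
  simp only [L4_m6, L4_m5, L4_m4, L4_m3, L4_m2, L4_m1, L4_p0]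
  ring

lemma L5_m7 (n : ℕ) : cw (-7) (n + 5) = 3679 * cw (-8) n + 3816 * cw (-7) n + 4331 * cw (-6) n + 4838 * cw (-5) n + 5324 * cw (-4) n + 5755 * cw (-3) n + 6115 * cw (-2) n + 6392 * cw (-1) n + 6678 * cw 0 n + 6254 * cw 1 n + 5863 * cw 2 n + 5458 * cw 3 n + 5078 * cw 4 n + 4724 * cw 5 n + 4377 * cw 6 n + 3986 * cw 7 n + 3850 * cw 8 n := by
  rw [show n + 5 = (n + 4) + 1 from by omega, st_m7]
  simp only [L4_m5, L4_m4, L4_m3, L4_m2, L4_m1, L4_p0, L4_p1]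
  ring

lemma L5_m6 (n : ℕ) : cw (-6) (n + 5) = 4206 * cw (-8) n + 4331 * cw (-7) n + 4834 * cw (-6) n + 5333 * cw (-5) n + 5853 * cw (-4) n + 6346 * cw (-3) n + 6783 * cw (-2) n + 7137 * cw (-1) n + 7512 * cw 0 n + 7096 * cw 1 n + 6696 * cw 2 n + 6224 * cw 3 n + 5743 * cw 4 n + 5280 * cw 5 n + 4843 * cw 6 n + 4377 * cw 7 n + 4233 * cw 8 n := by
  rw [show n + 5 = (n + 4) + 1 from by omega, st_m6]
  simp only [L4_m8, L4_m4, L4_m3, L4_m2, L4_m1, L4_p0, L4_p1, L4_p2]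
  ring

lemma L5_m5 (n : ℕ) : cw (-5) (n + 5) = 4693 * cw (-8) n + 4838 * cw (-7) n + 5333 * cw (-6) n + 5802 * cw (-5) n + 6306 * cw (-4) n + 6827 * cw (-3) n + 7321 * cw (-2) n + 7746 * cw (-1) n + 8201 * cw 0 n + 7807 * cw 1 n + 7430 * cw 2 n + 6946 * cw 3 n + 6394 * cw 4 n + 5827 * cw 5 n + 5280 * cw 6 n + 4724 * cw 7 n + 4559 * cw 8 n := by
  rw [show n + 5 = (n + 4) + 1 from by omega, st_m5]
  simp only [L4_m8, L4_m7, L4_m3, L4_m2, L4_m1, L4_p0, L4_p1, L4_p2, L4_p3]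
  ring

lemma L5_m4 (n : ℕ) : cw (-4) (n + 5) = 5137 * cw (-8) n + 5324 * cw (-7) n + 5853 * cw (-6) n + 6306 * cw (-5) n + 6778 * cw (-4) n + 7281 * cw (-3) n + 7801 * cw (-2) n + 8278 * cw (-1) n + 8804 * cw 0 n + 8416 * cw 1 n + 8067 * cw 2 n + 7601 * cw 3 n + 7034 * cw 4 n + 6394 * cw 5 n + 5743 * cw 6 n + 5078 * cw 7 n + 4875 * cw 8 n := by
  rw [show n + 5 = (n + 4) + 1 from by omega, st_m4]
  simp only [L4_m8, L4_m7, L4_m6, L4_m2, L4_m1, L4_p0, L4_p1, L4_p2, L4_p3, L4_p4]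
  ring

lemma L5_m3 (n : ℕ) : cw (-3) (n + 5) = 5516 * cw (-8) n + 5755 * cw (-7) n + 6346 * cw (-6) n + 6827 * cw (-5) n + 7281 * cw (-4) n + 7750 * cw (-3) n + 8250 * cw (-2) n + 8748 * cw (-1) n + 9324 * cw 0 n + 8931 * cw 1 n + 8592 * cw 2 n + 8151 * cw 3 n + 7601 * cw 4 n + 6946 * cw 5 n + 6224 * cw 6 n + 5458 * cw 7 n + 5196 * cw 8 n := by
  rw [show n + 5 = (n + 4) + 1 from by omega, st_m3]
  simp only [L4_m8, L4_m7, L4_m6, L4_m5, L4_m1, L4_p0, L4_p1, L4_p2, L4_p3, L4_p4, L4_p5]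
  ring

lemma L5_m2 (n : ℕ) : cw (-2) (n + 5) = 5827 * cw (-8) n + 6115 * cw (-7) n + 6783 * cw (-6) n + 7321 * cw (-5) n + 7801 * cw (-4) n + 8250 * cw (-3) n + 8714 * cw (-2) n + 9187 * cw (-1) n + 9781 * cw 0 n + 9366 * cw 1 n + 9025 * cw 2 n + 8592 * cw 3 n + 8067 * cw 4 n + 7430 * cw 5 n + 6696 * cw 6 n + 5863 * cw 7 n + 5542 * cw 8 n := by
  rw [show n + 5 = (n + 4) + 1 from by omega, st_m2]
  simp only [L4_m8, L4_m7, L4_m6, L4_m5, L4_m4, L4_p0, L4_p1, L4_p2, L4_p3, L4_p4, L4_p5, L4_p6]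
  ring

lemma L5_m1 (n : ℕ) : cw (-1) (n + 5) = 6059 * cw (-8) n + 6392 * cw (-7) n + 7137 * cw (-6) n + 7746 * cw (-5) n + 8278 * cw (-4) n + 8748 * cw (-3) n + 9187 * cw (-2) n + 9616 * cw (-1) n + 10183 * cw 0 n + 9725 * cw 1 n + 9366 * cw 2 n + 8931 * cw 3 n + 8416 * cw 4 n + 7807 * cw 5 n + 7096 * cw 6 n + 6254 * cw 7 n + 5893 * cw 8 n := by
  rw [show n + 5 = (n + 4) + 1 from by omega, st_m1]
  simp only [L4_m8, L4_m7, L4_m6, L4_m5, L4_m4, L4_m3, L4_p1, L4_p2, L4_p3, L4_p4, L4_p5, L4_p6, L4_p7]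
  ring

lemma L5_p0 (n : ℕ) : cw 0 (n + 5) = 6308 * cw (-8) n + 6678 * cw (-7) n + 7512 * cw (-6) n + 8201 * cw (-5) n + 8804 * cw (-4) n + 9324 * cw (-3) n + 9781 * cw (-2) n + 10183 * cw (-1) n + 10718 * cw 0 n + 10183 * cw 1 n + 9781 * cw 2 n + 9324 * cw 3 n + 8804 * cw 4 n + 8201 * cw 5 n + 7512 * cw 6 n + 6678 * cw 7 n + 6308 * cw 8 n := by
  rw [show n + 5 = (n + 4) + 1 from by omega, st_p0]
  simp only [L4_m8, L4_m7, L4_m6, L4_m5, L4_m4, L4_m3, L4_m2, L4_p2, L4_p3, L4_p4, L4_p5, L4_p6, L4_p7, L4_p8]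
  ring

lemma L5_p1 (n : ℕ) : cw 1 (n + 5) = 5893 * cw (-8) n + 6254 * cw (-7) n + 7096 * cw (-6) n + 7807 * cw (-5) n + 8416 * cw (-4) n + 8931 * cw (-3) n + 9366 * cw (-2) n + 9725 * cw (-1) n + 10183 * cw 0 n + 9616 * cw 1 n + 9187 * cw 2 n + 8748 * cw 3 n + 8278 * cw 4 n + 7746 * cw 5 n + 7137 * cw 6 n + 6392 * cw 7 n + 6059 * cw 8 n := by
  rw [show n + 5 = (n + 4) + 1 from by omega, st_p1]
  simp only [L4_m7, L4_m6, L4_m5, L4_m4, L4_m3, L4_m2, L4_m1, L4_p3, L4_p4, L4_p5, L4_p6, L4_p7, L4_p8]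
  ring

lemma L5_p2 (n : ℕ) : cw 2 (n + 5) = 5542 * cw (-8) n + 5863 * cw (-7) n + 6696 * cw (-6) n + 7430 * cw (-5) n + 8067 * cw (-4) n + 8592 * cw (-3) n + 9025 * cw (-2) n + 9366 * cw (-1) n + 9781 * cw 0 n + 9187 * cw 1 n + 8714 * cw 2 n + 8250 * cw 3 n + 7801 * cw 4 n + 7321 * cw 5 n + 6783 * cw 6 n + 6115 * cw 7 n + 5827 * cw 8 n := by
  rw [show n + 5 = (n + 4) + 1 from by omega, st_p2]
  simp only [L4_m6, L4_m5, L4_m4, L4_m3, L4_m2, L4_m1, L4_p0, L4_p4, L4_p5, L4_p6, L4_p7, L4_p8]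
  ring

lemma L5_p3 (n : ℕ) : cw 3 (n + 5) = 5196 * cw (-8) n + 5458 * cw (-7) n + 6224 * cw (-6) n + 6946 * cw (-5) n + 7601 * cw (-4) n + 8151 * cw (-3) n + 8592 * cw (-2) n + 8931 * cw (-1) n + 9324 * cw 0 n + 8748 * cw 1 n + 8250 * cw 2 n + 7750 * cw 3 n + 7281 * cw 4 n + 6827 * cw 5 n + 6346 * cw 6 n + 5755 * cw 7 n + 5516 * cw 8 n := by
  rw [show n + 5 = (n + 4) + 1 from by omega, st_p3]
  simp only [L4_m5, L4_m4, L4_m3, L4_m2, L4_m1, L4_p0, L4_p1, L4_p5, L4_p6, L4_p7, L4_p8]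
  ring

lemma L5_p4 (n : ℕ) : cw 4 (n + 5) = 4875 * cw (-8) n + 5078 * cw (-7) n + 5743 * cw (-6) n + 6394 * cw (-5) n + 7034 * cw (-4) n + 7601 * cw (-3) n + 8067 * cw (-2) n + 8416 * cw (-1) n + 8804 * cw 0 n + 8278 * cw 1 n + 7801 * cw 2 n + 7281 * cw 3 n + 6778 * cw 4 n + 6306 * cw 5 n + 5853 * cw 6 n + 5324 * cw 7 n + 5137 * cw 8 n := by
  rw [show n + 5 = (n + 4) + 1 from by omega, st_p4]
  simp only [L4_m4, L4_m3, L4_m2, L4_m1, L4_p0, L4_p1, L4_p2, L4_p6, L4_p7, L4_p8]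
  ring

lemma L5_p5 (n : ℕ) : cw 5 (n + 5) = 4559 * cw (-8) n + 4724 * cw (-7) n + 5280 * cw (-6) n + 5827 * cw (-5) n + 6394 * cw (-4) n + 6946 * cw (-3) n + 7430 * cw (-2) n + 7807 * cw (-1) n + 8201 * cw 0 n + 7746 * cw 1 n + 7321 * cw 2 n + 6827 * cw 3 n + 6306 * cw 4 n + 5802 * cw 5 n + 5333 * cw 6 n + 4838 * cw 7 n + 4693 * cw 8 n := by
  rw [show n + 5 = (n + 4) + 1 from by omega, st_p5]
  simp only [L4_m3, L4_m2, L4_m1, L4_p0, L4_p1, L4_p2, L4_p3, L4_p7, L4_p8]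
  ring

lemma L5_p6 (n : ℕ) : cw 6 (n + 5) = 4233 * cw (-8) n + 4377 * cw (-7) n + 4843 * cw (-6) n + 5280 * cw (-5) n + 5743 * cw (-4) n + 6224 * cw (-3) n + 6696 * cw (-2) n + 7096 * cw (-1) n + 7512 * cw 0 n + 7137 * cw 1 n + 6783 * cw 2 n + 6346 * cw 3 n + 5853 * cw 4 n + 5333 * cw 5 n + 4834 * cw 6 n + 4331 * cw 7 n + 4206 * cw 8 n := by
  rw [show n + 5 = (n + 4) + 1 from by omega, st_p6]
  simp only [L4_m2, L4_m1, L4_p0, L4_p1, L4_p2, L4_p3, L4_p4, L4_p8]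
  ring

lemma L5_p7 (n : ℕ) : cw 7 (n + 5) = 3850 * cw (-8) n + 3986 * cw (-7) n + 4377 * cw (-6) n + 4724 * cw (-5) n + 5078 * cw (-4) n + 5458 * cw (-3) n + 5863 * cw (-2) n + 6254 * cw (-1) n + 6678 * cw 0 n + 6392 * cw 1 n + 6115 * cw 2 n + 5755 * cw 3 n + 5324 * cw 4 n + 4838 * cw 5 n + 4331 * cw 6 n + 3816 * cw 7 n + 3679 * cw 8 n := by
  rw [show n + 5 = (n + 4) + 1 from by omega, st_p7]
  simp only [L4_m1, L4_p0, L4_p1, L4_p2, L4_p3, L4_p4, L4_p5]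
  ring

lemma L5_p8 (n : ℕ) : cw 8 (n + 5) = 3694 * cw (-8) n + 3850 * cw (-7) n + 4233 * cw (-6) n + 4559 * cw (-5) n + 4875 * cw (-4) n + 5196 * cw (-3) n + 5542 * cw (-2) n + 5893 * cw (-1) n + 6308 * cw 0 n + 6059 * cw 1 n + 5827 * cw 2 n + 5516 * cw 3 n + 5137 * cw 4 n + 4693 * cw 5 n + 4206 * cw 6 n + 3679 * cw 7 n + 3516 * cw 8 n := by
  rw [show n + 5 = (n + 4) + 1 from by omega, st_p8]
  simp only [L4_p0, L4_p1, L4_p2, L4_p3, L4_p4, L4_p5, L4_p6]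
  ring

lemma L6_m8 (n : ℕ) : cw (-8) (n + 6) = 37746 * cw (-8) n + 39433 * cw (-7) n + 43798 * cw (-6) n + 47536 * cw (-5) n + 51101 * cw (-4) n + 54526 * cw (-3) n + 57837 * cw (-2) n + 60895 * cw (-1) n + 64523 * cw 0 n + 61524 * cw 1 n + 58957 * cw 2 n + 55769 * cw 3 n + 52059 * cw 4 n + 47885 * cw 5 n + 43394 * cw 6 n + 38432 * cw 7 n + 36606 * cw 8 n := by
  rw [show n + 6 = (n + 5) + 1 from by omega, st_m8]
  simp only [L5_m6, L5_m5, L5_m4, L5_m3, L5_m2, L5_m1, L5_p0]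
  ring

lemma L6_m7 (n : ℕ) : cw (-7) (n + 6) = 39433 * cw (-8) n + 41356 * cw (-7) n + 46060 * cw (-6) n + 50010 * cw (-5) n + 53664 * cw (-4) n + 57111 * cw (-3) n + 60420 * cw (-2) n + 63483 * cw (-1) n + 67194 * cw 0 n + 64044 * cw 1 n + 61448 * cw 2 n + 58293 * cw 3 n + 54594 * cw 4 n + 50351 * cw 5 n + 45688 * cw 6 n + 40447 * cw 7 n + 38432 * cw 8 n := by
  rw [show n + 6 = (n + 5) + 1 from by omega, st_m7]
  simp only [L5_m5, L5_m4, L5_m3, L5_m2, L5_m1, L5_p0, L5_p1]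
  ring

lemma L6_m6 (n : ℕ) : cw (-6) (n + 6) = 43798 * cw (-8) n + 46060 * cw (-7) n + 51629 * cw (-6) n + 56331 * cw (-5) n + 60562 * cw (-4) n + 64392 * cw (-3) n + 67951 * cw (-2) n + 71162 * cw (-1) n + 75082 * cw 0 n + 71317 * cw 1 n + 68274 * cw 2 n + 64793 * cw 3 n + 60876 * cw 4 n + 56404 * cw 5 n + 51424 * cw 6 n + 45688 * cw 7 n + 43394 * cw 8 n := by
  rw [show n + 6 = (n + 5) + 1 from by omega, st_m6]
  simp only [L5_m8, L5_m4, L5_m3, L5_m2, L5_m1, L5_p0, L5_p1, L5_p2]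
  ring

lemma L6_m5 (n : ℕ) : cw (-5) (n + 6) = 47536 * cw (-8) n + 50010 * cw (-7) n + 56331 * cw (-6) n + 61809 * cw (-5) n + 66709 * cw (-4) n + 71017 * cw (-3) n + 74857 * cw (-2) n + 78207 * cw (-1) n + 82280 * cw 0 n + 77903 * cw 1 n + 74320 * cw 2 n + 70400 * cw 3 n + 66201 * cw 4 n + 61561 * cw 5 n + 56404 * cw 6 n + 50351 * cw 7 n + 47885 * cw 8 n := by
  rw [show n + 6 = (n + 5) + 1 from by omega, st_m5]
  simp only [L5_m8, L5_m7, L5_m3, L5_m2, L5_m1, L5_p0, L5_p1, L5_p2, L5_p3]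
  ring

lemma L6_m4 (n : ℕ) : cw (-4) (n + 6) = 51101 * cw (-8) n + 53664 * cw (-7) n + 60562 * cw (-6) n + 66709 * cw (-5) n + 72315 * cw (-4) n + 77214 * cw (-3) n + 81457 * cw (-2) n + 85012 * cw (-1) n + 89272 * cw 0 n + 84346 * cw 1 n + 80225 * cw 2 n + 75754 * cw 3 n + 71121 * cw 4 n + 66201 * cw 5 n + 60876 * cw 6 n + 54594 * cw 7 n + 52059 * cw 8 n := by
  rw [show n + 6 = (n + 5) + 1 from by omega, st_m4]
  simp only [L5_m8, L5_m7, L5_m6, L5_m2, L5_m1, L5_p0, L5_p1, L5_p2, L5_p3, L5_p4]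
  ring

lemma L6_m3 (n : ℕ) : cw (-3) (n + 6) = 54526 * cw (-8) n + 57111 * cw (-7) n + 64392 * cw (-6) n + 71017 * cw (-5) n + 77214 * cw (-4) n + 82737 * cw (-3) n + 87494 * cw (-2) n + 91378 * cw (-1) n + 95893 * cw 0 n + 90533 * cw 1 n + 85951 * cw 2 n + 80935 * cw 3 n + 75754 * cw 4 n + 70400 * cw 5 n + 64793 * cw 6 n + 58293 * cw 7 n + 55769 * cw 8 n := by
  rw [show n + 6 = (n + 5) + 1 from by omega, st_m3]
  simp only [L5_m8, L5_m7, L5_m6, L5_m5, L5_m1, L5_p0, L5_p1, L5_p2, L5_p3, L5_p4, L5_p5]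
  ring

lemma L6_m2 (n : ℕ) : cw (-2) (n + 6) = 57837 * cw (-8) n + 60420 * cw (-7) n + 67951 * cw (-6) n + 74857 * cw (-5) n + 81457 * cw (-4) n + 87494 * cw (-3) n + 92804 * cw (-2) n + 97136 * cw (-1) n + 102026 * cw 0 n + 96361 * cw 1 n + 91435 * cw 2 n + 85951 * cw 3 n + 80225 * cw 4 n + 74320 * cw 5 n + 68274 * cw 6 n + 61448 * cw 7 n + 58957 * cw 8 n := by
  rw [show n + 6 = (n + 5) + 1 from by omega, st_m2]
  simp only [L5_m8, L5_m7, L5_m6, L5_m5, L5_m4, L5_p0, L5_p1, L5_p2, L5_p3, L5_p4, L5_p5, L5_p6]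
  ring

lemma L6_m1 (n : ℕ) : cw (-1) (n + 6) = 60895 * cw (-8) n + 63483 * cw (-7) n + 71162 * cw (-6) n + 78207 * cw (-5) n + 85012 * cw (-4) n + 91378 * cw (-3) n + 97136 * cw (-2) n + 101955 * cw (-1) n + 107310 * cw 0 n + 101501 * cw 1 n + 96361 * cw 2 n + 90533 * cw 3 n + 84346 * cw 4 n + 77903 * cw 5 n + 71317 * cw 6 n + 64044 * cw 7 n + 61524 * cw 8 n := by
  rw [show n + 6 = (n + 5) + 1 from by omega, st_m1]
  simp only [L5_m8, L5_m7, L5_m6, L5_m5, L5_m4, L5_m3, L5_p1, L5_p2, L5_p3, L5_p4, L5_p5, L5_p6, L5_p7]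
  ring

lemma L6_p0 (n : ℕ) : cw 0 (n + 6) = 64523 * cw (-8) n + 67194 * cw (-7) n + 75082 * cw (-6) n + 82280 * cw (-5) n + 89272 * cw (-4) n + 95893 * cw (-3) n + 102026 * cw (-2) n + 107310 * cw (-1) n + 113216 * cw 0 n + 107310 * cw 1 n + 102026 * cw 2 n + 95893 * cw 3 n + 89272 * cw 4 n + 82280 * cw 5 n + 75082 * cw 6 n + 67194 * cw 7 n + 64523 * cw 8 n := by
  rw [show n + 6 = (n + 5) + 1 from by omega, st_p0]
  simp only [L5_m8, L5_m7, L5_m6, L5_m5, L5_m4, L5_m3, L5_m2, L5_p2, L5_p3, L5_p4, L5_p5, L5_p6, L5_p7, L5_p8]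
  ring

lemma L6_p1 (n : ℕ) : cw 1 (n + 6) = 61524 * cw (-8) n + 64044 * cw (-7) n + 71317 * cw (-6) n + 77903 * cw (-5) n + 84346 * cw (-4) n + 90533 * cw (-3) n + 96361 * cw (-2) n + 101501 * cw (-1) n + 107310 * cw 0 n + 101955 * cw 1 n + 97136 * cw 2 n + 91378 * cw 3 n + 85012 * cw 4 n + 78207 * cw 5 n + 71162 * cw 6 n + 63483 * cw 7 n + 60895 * cw 8 n := by
  rw [show n + 6 = (n + 5) + 1 from by omega, st_p1]
  simp only [L5_m7, L5_m6, L5_m5, L5_m4, L5_m3, L5_m2, L5_m1, L5_p3, L5_p4, L5_p5, L5_p6, L5_p7, L5_p8]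
  ring

lemma L6_p2 (n : ℕ) : cw 2 (n + 6) = 58957 * cw (-8) n + 61448 * cw (-7) n + 68274 * cw (-6) n + 74320 * cw (-5) n + 80225 * cw (-4) n + 85951 * cw (-3) n + 91435 * cw (-2) n + 96361 * cw (-1) n + 102026 * cw 0 n + 97136 * cw 1 n + 92804 * cw 2 n + 87494 * cw 3 n + 81457 * cw 4 n + 74857 * cw 5 n + 67951 * cw 6 n + 60420 * cw 7 n + 57837 * cw 8 n := by
  rw [show n + 6 = (n + 5) + 1 from by omega, st_p2]
  simp only [L5_m6, L5_m5, L5_m4, L5_m3, L5_m2, L5_m1, L5_p0, L5_p4, L5_p5, L5_p6, L5_p7, L5_p8]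
  ring

lemma L6_p3 (n : ℕ) : cw 3 (n + 6) = 55769 * cw (-8) n + 58293 * cw (-7) n + 64793 * cw (-6) n + 70400 * cw (-5) n + 75754 * cw (-4) n + 80935 * cw (-3) n + 85951 * cw (-2) n + 90533 * cw (-1) n + 95893 * cw 0 n + 91378 * cw 1 n + 87494 * cw 2 n + 82737 * cw 3 n + 77214 * cw 4 n + 71017 * cw 5 n + 64392 * cw 6 n + 57111 * cw 7 n + 54526 * cw 8 n := by
  rw [show n + 6 = (n + 5) + 1 from by omega, st_p3]
  simp only [L5_m5, L5_m4, L5_m3, L5_m2, L5_m1, L5_p0, L5_p1, L5_p5, L5_p6, L5_p7, L5_p8]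
  ring

lemma L6_p4 (n : ℕ) : cw 4 (n + 6) = 52059 * cw (-8) n + 54594 * cw (-7) n + 60876 * cw (-6) n + 66201 * cw (-5) n + 71121 * cw (-4) n + 75754 * cw (-3) n + 80225 * cw (-2) n + 84346 * cw (-1) n + 89272 * cw 0 n + 85012 * cw 1 n + 81457 * cw 2 n + 77214 * cw 3 n + 72315 * cw 4 n + 66709 * cw 5 n + 60562 * cw 6 n + 53664 * cw 7 n + 51101 * cw 8 n := by
  rw [show n + 6 = (n + 5) + 1 from by omega, st_p4]
  simp only [L5_m4, L5_m3, L5_m2, L5_m1, L5_p0, L5_p1, L5_p2, L5_p6, L5_p7, L5_p8]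
  ring

lemma L6_p5 (n : ℕ) : cw 5 (n + 6) = 47885 * cw (-8) n + 50351 * cw (-7) n + 56404 * cw (-6) n + 61561 * cw (-5) n + 66201 * cw (-4) n + 70400 * cw (-3) n + 74320 * cw (-2) n + 77903 * cw (-1) n + 82280 * cw 0 n + 78207 * cw 1 n + 74857 * cw 2 n + 71017 * cw 3 n + 66709 * cw 4 n + 61809 * cw 5 n + 56331 * cw 6 n + 50010 * cw 7 n + 47536 * cw 8 n := by
  rw [show n + 6 = (n + 5) + 1 from by omega, st_p5]
  simp only [L5_m3, L5_m2, L5_m1, L5_p0, L5_p1, L5_p2, L5_p3, L5_p7, L5_p8]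
  ring

lemma L6_p6 (n : ℕ) : cw 6 (n + 6) = 43394 * cw (-8) n + 45688 * cw (-7) n + 51424 * cw (-6) n + 56404 * cw (-5) n + 60876 * cw (-4) n + 64793 * cw (-3) n + 68274 * cw (-2) n + 71317 * cw (-1) n + 75082 * cw 0 n + 71162 * cw 1 n + 67951 * cw 2 n + 64392 * cw 3 n + 60562 * cw 4 n + 56331 * cw 5 n + 51629 * cw 6 n + 46060 * cw 7 n + 43798 * cw 8 n := by
  rw [show n + 6 = (n + 5) + 1 from by omega, st_p6]
  simp only [L5_m2, L5_m1, L5_p0, L5_p1, L5_p2, L5_p3, L5_p4, L5_p8]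
  ring

lemma L6_p7 (n : ℕ) : cw 7 (n + 6) = 38432 * cw (-8) n + 40447 * cw (-7) n + 45688 * cw (-6) n + 50351 * cw (-5) n + 54594 * cw (-4) n + 58293 * cw (-3) n + 61448 * cw (-2) n + 64044 * cw (-1) n + 67194 * cw 0 n + 63483 * cw 1 n + 60420 * cw 2 n + 57111 * cw 3 n + 53664 * cw 4 n + 50010 * cw 5 n + 46060 * cw 6 n + 41356 * cw 7 n + 39433 * cw 8 n := by
  rw [show n + 6 = (n + 5) + 1 from by omega, st_p7]
  simp only [L5_m1, L5_p0, L5_p1, L5_p2, L5_p3, L5_p4, L5_p5]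
  ring

lemma L6_p8 (n : ℕ) : cw 8 (n + 6) = 36606 * cw (-8) n + 38432 * cw (-7) n + 43394 * cw (-6) n + 47885 * cw (-5) n + 52059 * cw (-4) n + 55769 * cw (-3) n + 58957 * cw (-2) n + 61524 * cw (-1) n + 64523 * cw 0 n + 60895 * cw 1 n + 57837 * cw 2 n + 54526 * cw 3 n + 51101 * cw 4 n + 47536 * cw 5 n + 43798 * cw 6 n + 39433 * cw 7 n + 37746 * cw 8 n := by
  rw [show n + 6 = (n + 5) + 1 from by omega, st_p8]
  simp only [L5_p0, L5_p1, L5_p2, L5_p3, L5_p4, L5_p5, L5_p6]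
  ring

lemma L7_m8 (n : ℕ) : cw (-8) (n + 7) = 380216 * cw (-8) n + 397942 * cw (-7) n + 447109 * cw (-6) n + 491210 * cw (-5) n + 532541 * cw (-4) n + 570125 * cw (-3) n + 603725 * cw (-2) n + 632160 * cw (-1) n + 665079 * cw 0 n + 629271 * cw 1 n + 598592 * cw 2 n + 564259 * cw 3 n + 527795 * cw 4 n + 489069 * cw 5 n + 448170 * cw 6 n + 401612 * cw 7 n + 384111 * cw 8 n := by
  rw [show n + 7 = (n + 6) + 1 from by omega, st_m8]
  simp only [L6_m6, L6_m5, L6_m4, L6_m3, L6_m2, L6_m1, L6_p0]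
  ring

lemma L7_m7 (n : ℕ) : cw (-7) (n + 7) = 397942 * cw (-8) n + 415926 * cw (-7) n + 466797 * cw (-6) n + 512782 * cw (-5) n + 556325 * cw (-4) n + 596266 * cw (-3) n + 632135 * cw (-2) n + 662499 * cw (-1) n + 697307 * cw 0 n + 659909 * cw 1 n + 627454 * cw 2 n + 590844 * cw 3 n + 551931 * cw 4 n + 510872 * cw 5 n + 467908 * cw 6 n + 419407 * cw 7 n + 401612 * cw 8 n := by
  rw [show n + 7 = (n + 6) + 1 from by omega, st_m7]
  simp only [L6_m5, L6_m4, L6_m3, L6_m2, L6_m1, L6_p0, L6_p1]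
  ring

lemma L7_m6 (n : ℕ) : cw (-6) (n + 7) = 447109 * cw (-8) n + 466797 * cw (-7) n + 522538 * cw (-6) n + 572829 * cw (-5) n + 620942 * cw (-4) n + 665726 * cw (-3) n + 706550 * cw (-2) n + 741548 * cw (-1) n + 781576 * cw 0 n + 740666 * cw 1 n + 704895 * cw 2 n + 663707 * cw 3 n + 619246 * cw 4 n + 572053 * cw 5 n + 522849 * cw 6 n + 467908 * cw 7 n + 448170 * cw 8 n := by
  rw [show n + 7 = (n + 6) + 1 from by omega, st_m6]
  simp only [L6_m8, L6_m4, L6_m3, L6_m2, L6_m1, L6_p0, L6_p1, L6_p2]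
  ring

lemma L7_m5 (n : ℕ) : cw (-5) (n + 7) = 491210 * cw (-8) n + 512782 * cw (-7) n + 572829 * cw (-6) n + 626530 * cw (-5) n + 678045 * cw (-4) n + 726558 * cw (-3) n + 771464 * cw (-2) n + 810552 * cw (-1) n + 855391 * cw 0 n + 811742 * cw 1 n + 773612 * cw 2 n + 728983 * cw 3 n + 679933 * cw 4 n + 627220 * cw 5 n + 572053 * cw 6 n + 510872 * cw 7 n + 489069 * cw 8 n := by
  rw [show n + 7 = (n + 6) + 1 from by omega, st_m5]
  simp only [L6_m8, L6_m7, L6_m3, L6_m2, L6_m1, L6_p0, L6_p1, L6_p2, L6_p3]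
  ring

lemma L7_m4 (n : ℕ) : cw (-4) (n + 7) = 532541 * cw (-8) n + 556325 * cw (-7) n + 620942 * cw (-6) n + 678045 * cw (-5) n + 732514 * cw (-4) n + 783967 * cw (-3) n + 832146 * cw (-2) n + 874682 * cw (-1) n + 923852 * cw 0 n + 877538 * cw 1 n + 837392 * cw 2 n + 790055 * cw 3 n + 737370 * cw 4 n + 679933 * cw 5 n + 619246 * cw 6 n + 551931 * cw 7 n + 527795 * cw 8 n := by
  rw [show n + 7 = (n + 6) + 1 from by omega, st_m4]
  simp only [L6_m8, L6_m7, L6_m6, L6_m2, L6_m1, L6_p0, L6_p1, L6_p2, L6_p3, L6_p4]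
  ring

lemma L7_m3 (n : ℕ) : cw (-3) (n + 7) = 570125 * cw (-8) n + 596266 * cw (-7) n + 665726 * cw (-6) n + 726558 * cw (-5) n + 783967 * cw (-4) n + 837890 * cw (-3) n + 888519 * cw (-2) n + 933656 * cw (-1) n + 986386 * cw 0 n + 937287 * cw 1 n + 895134 * cw 2 n + 845521 * cw 3 n + 790055 * cw 4 n + 728983 * cw 5 n + 663707 * cw 6 n + 590844 * cw 7 n + 564259 * cw 8 n := by
  rw [show n + 7 = (n + 6) + 1 from by omega, st_m3]
  simp only [L6_m8, L6_m7, L6_m6, L6_m5, L6_m1, L6_p0, L6_p1, L6_p2, L6_p3, L6_p4, L6_p5]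
  ring

lemma L7_m2 (n : ℕ) : cw (-2) (n + 7) = 603725 * cw (-8) n + 632135 * cw (-7) n + 706550 * cw (-6) n + 771464 * cw (-5) n + 832146 * cw (-4) n + 888519 * cw (-3) n + 941114 * cw (-2) n + 988030 * cw (-1) n + 1043430 * cw 0 n + 991294 * cw 1 n + 946949 * cw 2 n + 895134 * cw 3 n + 837392 * cw 4 n + 773612 * cw 5 n + 704895 * cw 6 n + 627454 * cw 7 n + 598592 * cw 8 n := by
  rw [show n + 7 = (n + 6) + 1 from by omega, st_m2]
  simp only [L6_m8, L6_m7, L6_m6, L6_m5, L6_m4, L6_p0, L6_p1, L6_p2, L6_p3, L6_p4, L6_p5, L6_p6]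
  ring

lemma L7_m1 (n : ℕ) : cw (-1) (n + 7) = 632160 * cw (-8) n + 662499 * cw (-7) n + 741548 * cw (-6) n + 810552 * cw (-5) n + 874682 * cw (-4) n + 933656 * cw (-3) n + 988030 * cw (-2) n + 1036142 * cw (-1) n + 1093301 * cw 0 n + 1038000 * cw 1 n + 991294 * cw 2 n + 937287 * cw 3 n + 877538 * cw 4 n + 811742 * cw 5 n + 740666 * cw 6 n + 659909 * cw 7 n + 629271 * cw 8 n := by
  rw [show n + 7 = (n + 6) + 1 from by omega, st_m1]
  simp only [L6_m8, L6_m7, L6_m6, L6_m5, L6_m4, L6_m3, L6_p1, L6_p2, L6_p3, L6_p4, L6_p5, L6_p6, L6_p7]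
  ring

lemma L7_p0 (n : ℕ) : cw 0 (n + 7) = 665079 * cw (-8) n + 697307 * cw (-7) n + 781576 * cw (-6) n + 855391 * cw (-5) n + 923852 * cw (-4) n + 986386 * cw (-3) n + 1043430 * cw (-2) n + 1093301 * cw (-1) n + 1152540 * cw 0 n + 1093301 * cw 1 n + 1043430 * cw 2 n + 986386 * cw 3 n + 923852 * cw 4 n + 855391 * cw 5 n + 781576 * cw 6 n + 697307 * cw 7 n + 665079 * cw 8 n := by
  rw [show n + 7 = (n + 6) + 1 from by omega, st_p0]
  simp only [L6_m8, L6_m7, L6_m6, L6_m5, L6_m4, L6_m3, L6_m2, L6_p2, L6_p3, L6_p4, L6_p5, L6_p6, L6_p7, L6_p8]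
  ring

lemma L7_p1 (n : ℕ) : cw 1 (n + 7) = 629271 * cw (-8) n + 659909 * cw (-7) n + 740666 * cw (-6) n + 811742 * cw (-5) n + 877538 * cw (-4) n + 937287 * cw (-3) n + 991294 * cw (-2) n + 1038000 * cw (-1) n + 1093301 * cw 0 n + 1036142 * cw 1 n + 988030 * cw 2 n + 933656 * cw 3 n + 874682 * cw 4 n + 810552 * cw 5 n + 741548 * cw 6 n + 662499 * cw 7 n + 632160 * cw 8 n := by
  rw [show n + 7 = (n + 6) + 1 from by omega, st_p1]
  simp only [L6_m7, L6_m6, L6_m5, L6_m4, L6_m3, L6_m2, L6_m1, L6_p3, L6_p4, L6_p5, L6_p6, L6_p7, L6_p8]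
  ring

lemma L7_p2 (n : ℕ) : cw 2 (n + 7) = 598592 * cw (-8) n + 627454 * cw (-7) n + 704895 * cw (-6) n + 773612 * cw (-5) n + 837392 * cw (-4) n + 895134 * cw (-3) n + 946949 * cw (-2) n + 991294 * cw (-1) n + 1043430 * cw 0 n + 988030 * cw 1 n + 941114 * cw 2 n + 888519 * cw 3 n + 832146 * cw 4 n + 771464 * cw 5 n + 706550 * cw 6 n + 632135 * cw 7 n + 603725 * cw 8 n := by
  rw [show n + 7 = (n + 6) + 1 from by omega, st_p2]
  simp only [L6_m6, L6_m5, L6_m4, L6_m3, L6_m2, L6_m1, L6_p0, L6_p4, L6_p5, L6_p6, L6_p7, L6_p8]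
  ring

lemma L7_p3 (n : ℕ) : cw 3 (n + 7) = 564259 * cw (-8) n + 590844 * cw (-7) n + 663707 * cw (-6) n + 728983 * cw (-5) n + 790055 * cw (-4) n + 845521 * cw (-3) n + 895134 * cw (-2) n + 937287 * cw (-1) n + 986386 * cw 0 n + 933656 * cw 1 n + 888519 * cw 2 n + 837890 * cw 3 n + 783967 * cw 4 n + 726558 * cw 5 n + 665726 * cw 6 n + 596266 * cw 7 n + 570125 * cw 8 n := by
  rw [show n + 7 = (n + 6) + 1 from by omega, st_p3]
  simp only [L6_m5, L6_m4, L6_m3, L6_m2, L6_m1, L6_p0, L6_p1, L6_p5, L6_p6, L6_p7, L6_p8]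
  ring

lemma L7_p4 (n : ℕ) : cw 4 (n + 7) = 527795 * cw (-8) n + 551931 * cw (-7) n + 619246 * cw (-6) n + 679933 * cw (-5) n + 737370 * cw (-4) n + 790055 * cw (-3) n + 837392 * cw (-2) n + 877538 * cw (-1) n + 923852 * cw 0 n + 874682 * cw 1 n + 832146 * cw 2 n + 783967 * cw 3 n + 732514 * cw 4 n + 678045 * cw 5 n + 620942 * cw 6 n + 556325 * cw 7 n + 532541 * cw 8 n := by
  rw [show n + 7 = (n + 6) + 1 from by omega, st_p4]
  simp only [L6_m4, L6_m3, L6_m2, L6_m1, L6_p0, L6_p1, L6_p2, L6_p6, L6_p7, L6_p8]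
  ring

lemma L7_p5 (n : ℕ) : cw 5 (n + 7) = 489069 * cw (-8) n + 510872 * cw (-7) n + 572053 * cw (-6) n + 627220 * cw (-5) n + 679933 * cw (-4) n + 728983 * cw (-3) n + 773612 * cw (-2) n + 811742 * cw (-1) n + 855391 * cw 0 n + 810552 * cw 1 n + 771464 * cw 2 n + 726558 * cw 3 n + 678045 * cw 4 n + 626530 * cw 5 n + 572829 * cw 6 n + 512782 * cw 7 n + 491210 * cw 8 n := by
  rw [show n + 7 = (n + 6) + 1 from by omega, st_p5]
  simp only [L6_m3, L6_m2, L6_m1, L6_p0, L6_p1, L6_p2, L6_p3, L6_p7, L6_p8]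
  ring

lemma L7_p6 (n : ℕ) : cw 6 (n + 7) = 448170 * cw (-8) n + 467908 * cw (-7) n + 522849 * cw (-6) n + 572053 * cw (-5) n + 619246 * cw (-4) n + 663707 * cw (-3) n + 704895 * cw (-2) n + 740666 * cw (-1) n + 781576 * cw 0 n + 741548 * cw 1 n + 706550 * cw 2 n + 665726 * cw 3 n + 620942 * cw 4 n + 572829 * cw 5 n + 522538 * cw 6 n + 466797 * cw 7 n + 447109 * cw 8 n := by
  rw [show n + 7 = (n + 6) + 1 from by omega, st_p6]
  simp only [L6_m2, L6_m1, L6_p0, L6_p1, L6_p2, L6_p3, L6_p4, L6_p8]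
  ring

lemma L7_p7 (n : ℕ) : cw 7 (n + 7) = 401612 * cw (-8) n + 419407 * cw (-7) n + 467908 * cw (-6) n + 510872 * cw (-5) n + 551931 * cw (-4) n + 590844 * cw (-3) n + 627454 * cw (-2) n + 659909 * cw (-1) n + 697307 * cw 0 n + 662499 * cw 1 n + 632135 * cw 2 n + 596266 * cw 3 n + 556325 * cw 4 n + 512782 * cw 5 n + 466797 * cw 6 n + 415926 * cw 7 n + 397942 * cw 8 n := by
  rw [show n + 7 = (n + 6) + 1 from by omega, st_p7]
  simp only [L6_m1, L6_p0, L6_p1, L6_p2, L6_p3, L6_p4, L6_p5]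
  ring

lemma L7_p8 (n : ℕ) : cw 8 (n + 7) = 384111 * cw (-8) n + 401612 * cw (-7) n + 448170 * cw (-6) n + 489069 * cw (-5) n + 527795 * cw (-4) n + 564259 * cw (-3) n + 598592 * cw (-2) n + 629271 * cw (-1) n + 665079 * cw 0 n + 632160 * cw 1 n + 603725 * cw 2 n + 570125 * cw 3 n + 532541 * cw 4 n + 491210 * cw 5 n + 447109 * cw 6 n + 397942 * cw 7 n + 380216 * cw 8 n := by
  rw [show n + 7 = (n + 6) + 1 from by omega, st_p8]
  simp only [L6_p0, L6_p1, L6_p2, L6_p3, L6_p4, L6_p5, L6_p6]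
  ring

lemma L8_m8 (n : ℕ) : cw (-8) (n + 8) = 3941949 * cw (-8) n + 4124111 * cw (-7) n + 4611709 * cw (-6) n + 5041369 * cw (-5) n + 5446148 * cw (-4) n + 5822702 * cw (-3) n + 6171253 * cw (-2) n + 6477911 * cw (-1) n + 6836476 * cw 0 n + 6489828 * cw 1 n + 6192706 * cw 2 n + 5847073 * cw 3 n + 5465386 * cw 4 n + 5048934 * cw 5 n + 4604992 * cw 6 n + 4106225 * cw 7 n + 3922235 * cw 8 n := by
  rw [show n + 8 = (n + 7) + 1 from by omega, st_m8]
  simp only [L7_m6, L7_m5, L7_m4, L7_m3, L7_m2, L7_m1, L7_p0]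
  ring

lemma L8_m7 (n : ℕ) : cw (-7) (n + 8) = 4124111 * cw (-8) n + 4317223 * cw (-7) n + 4829837 * cw (-6) n + 5280282 * cw (-5) n + 5702744 * cw (-4) n + 6094263 * cw (-3) n + 6455997 * cw (-2) n + 6774363 * cw (-1) n + 7148201 * cw 0 n + 6785304 * cw 1 n + 6475841 * cw 2 n + 6117022 * cw 3 n + 5720822 * cw 4 n + 5287433 * cw 5 n + 4823691 * cw 6 n + 4300816 * cw 7 n + 4106225 * cw 8 n := by
  rw [show n + 8 = (n + 7) + 1 from by omega, st_m7]
  simp only [L7_m5, L7_m4, L7_m3, L7_m2, L7_m1, L7_p0, L7_p1]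
  ring

lemma L8_m6 (n : ℕ) : cw (-6) (n + 8) = 4611709 * cw (-8) n + 4829837 * cw (-7) n + 5409012 * cw (-6) n + 5918574 * cw (-5) n + 6394632 * cw (-4) n + 6832964 * cw (-3) n + 7235207 * cw (-2) n + 7587265 * cw (-1) n + 8001319 * cw 0 n + 7590863 * cw 1 n + 7241935 * cw 2 n + 6840817 * cw 3 n + 6400830 * cw 4 n + 5920746 * cw 5 n + 5406358 * cw 6 n + 4823691 * cw 7 n + 4604992 * cw 8 n := by
  rw [show n + 8 = (n + 7) + 1 from by omega, st_m6]
  simp only [L7_m8, L7_m4, L7_m3, L7_m2, L7_m1, L7_p0, L7_p1, L7_p2]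
  ring

lemma L8_m5 (n : ℕ) : cw (-5) (n + 8) = 5041369 * cw (-8) n + 5280282 * cw (-7) n + 5918574 * cw (-6) n + 6482294 * cw (-5) n + 7008498 * cw (-4) n + 7490784 * cw (-3) n + 7930330 * cw (-2) n + 8312369 * cw (-1) n + 8761160 * cw 0 n + 8306890 * cw 1 n + 7920516 * cw 2 n + 7479496 * cw 3 n + 6999358 * cw 4 n + 6478243 * cw 5 n + 5920746 * cw 6 n + 5287433 * cw 7 n + 5048934 * cw 8 n := by
  rw [show n + 8 = (n + 7) + 1 from by omega, st_m5]
  simp only [L7_m8, L7_m7, L7_m3, L7_m2, L7_m1, L7_p0, L7_p1, L7_p2, L7_p3]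
  ring

lemma L8_m4 (n : ℕ) : cw (-4) (n + 8) = 5446148 * cw (-8) n + 5702744 * cw (-7) n + 6394632 * cw (-6) n + 7008498 * cw (-5) n + 7582843 * cw (-4) n + 8108675 * cw (-3) n + 8585753 * cw (-2) n + 8997799 * cw (-1) n + 9480202 * cw 0 n + 8984951 * cw 1 n + 8562423 * cw 2 n + 8081649 * cw 3 n + 7561063 * cw 4 n + 6999358 * cw 5 n + 6400830 * cw 6 n + 5720822 * cw 7 n + 5465386 * cw 8 n := by
  rw [show n + 8 = (n + 7) + 1 from by omega, st_m4]
  simp only [L7_m8, L7_m7, L7_m6, L7_m2, L7_m1, L7_p0, L7_p1, L7_p2, L7_p3, L7_p4]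
  ring

lemma L8_m3 (n : ℕ) : cw (-3) (n + 8) = 5822702 * cw (-8) n + 6094263 * cw (-7) n + 6832964 * cw (-6) n + 7490784 * cw (-5) n + 8108675 * cw (-4) n + 8675697 * cw (-3) n + 9189715 * cw (-2) n + 9632063 * cw (-1) n + 10147554 * cw 0 n + 9615951 * cw 1 n + 9160550 * cw 2 n + 8642056 * cw 3 n + 8081649 * cw 4 n + 7479496 * cw 5 n + 6840817 * cw 6 n + 6117022 * cw 7 n + 5847073 * cw 8 n := by
  rw [show n + 8 = (n + 7) + 1 from by omega, st_m3]
  simp only [L7_m8, L7_m7, L7_m6, L7_m5, L7_m1, L7_p0, L7_p1, L7_p2, L7_p3, L7_p4, L7_p5]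
  ring

lemma L8_m2 (n : ℕ) : cw (-2) (n + 8) = 6171253 * cw (-8) n + 6455997 * cw (-7) n + 7235207 * cw (-6) n + 7930330 * cw (-5) n + 8585753 * cw (-4) n + 9189715 * cw (-3) n + 9738726 * cw (-2) n + 10211269 * cw (-1) n + 10759681 * cw 0 n + 10197037 * cw 1 n + 9713198 * cw 2 n + 9160550 * cw 3 n + 8562423 * cw 4 n + 7920516 * cw 5 n + 7241935 * cw 6 n + 6475841 * cw 7 n + 6192706 * cw 8 n := by
  rw [show n + 8 = (n + 7) + 1 from by omega, st_m2]
  simp only [L7_m8, L7_m7, L7_m6, L7_m5, L7_m4, L7_p0, L7_p1, L7_p2, L7_p3, L7_p4, L7_p5, L7_p6]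
  ring

lemma L8_m1 (n : ℕ) : cw (-1) (n + 8) = 6477911 * cw (-8) n + 6774363 * cw (-7) n + 7587265 * cw (-6) n + 8312369 * cw (-5) n + 8997799 * cw (-4) n + 9632063 * cw (-3) n + 10211269 * cw (-2) n + 10711533 * cw (-1) n + 11290834 * cw 0 n + 10703522 * cw 1 n + 10197037 * cw 2 n + 9615951 * cw 3 n + 8984951 * cw 4 n + 8306890 * cw 5 n + 7590863 * cw 6 n + 6785304 * cw 7 n + 6489828 * cw 8 n := by
  rw [show n + 8 = (n + 7) + 1 from by omega, st_m1]
  simp only [L7_m8, L7_m7, L7_m6, L7_m5, L7_m4, L7_m3, L7_p1, L7_p2, L7_p3, L7_p4, L7_p5, L7_p6, L7_p7]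
  ring

lemma L8_p0 (n : ℕ) : cw 0 (n + 8) = 6836476 * cw (-8) n + 7148201 * cw (-7) n + 8001319 * cw (-6) n + 8761160 * cw (-5) n + 9480202 * cw (-4) n + 10147554 * cw (-3) n + 10759681 * cw (-2) n + 11290834 * cw (-1) n + 11906042 * cw 0 n + 11290834 * cw 1 n + 10759681 * cw 2 n + 10147554 * cw 3 n + 9480202 * cw 4 n + 8761160 * cw 5 n + 8001319 * cw 6 n + 7148201 * cw 7 n + 6836476 * cw 8 n := by
  rw [show n + 8 = (n + 7) + 1 from by omega, st_p0]
  simp only [L7_m8, L7_m7, L7_m6, L7_m5, L7_m4, L7_m3, L7_m2, L7_p2, L7_p3, L7_p4, L7_p5, L7_p6, L7_p7, L7_p8]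
  ring

lemma L8_p1 (n : ℕ) : cw 1 (n + 8) = 6489828 * cw (-8) n + 6785304 * cw (-7) n + 7590863 * cw (-6) n + 8306890 * cw (-5) n + 8984951 * cw (-4) n + 9615951 * cw (-3) n + 10197037 * cw (-2) n + 10703522 * cw (-1) n + 11290834 * cw 0 n + 10711533 * cw 1 n + 10211269 * cw 2 n + 9632063 * cw 3 n + 8997799 * cw 4 n + 8312369 * cw 5 n + 7587265 * cw 6 n + 6774363 * cw 7 n + 6477911 * cw 8 n := by
  rw [show n + 8 = (n + 7) + 1 from by omega, st_p1]
  simp only [L7_m7, L7_m6, L7_m5, L7_m4, L7_m3, L7_m2, L7_m1, L7_p3, L7_p4, L7_p5, L7_p6, L7_p7, L7_p8]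
  ring

lemma L8_p2 (n : ℕ) : cw 2 (n + 8) = 6192706 * cw (-8) n + 6475841 * cw (-7) n + 7241935 * cw (-6) n + 7920516 * cw (-5) n + 8562423 * cw (-4) n + 9160550 * cw (-3) n + 9713198 * cw (-2) n + 10197037 * cw (-1) n + 10759681 * cw 0 n + 10211269 * cw 1 n + 9738726 * cw 2 n + 9189715 * cw 3 n + 8585753 * cw 4 n + 7930330 * cw 5 n + 7235207 * cw 6 n + 6455997 * cw 7 n + 6171253 * cw 8 n := by
  rw [show n + 8 = (n + 7) + 1 from by omega, st_p2]
  simp only [L7_m6, L7_m5, L7_m4, L7_m3, L7_m2, L7_m1, L7_p0, L7_p4, L7_p5, L7_p6, L7_p7, L7_p8]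
  ring

lemma L8_p3 (n : ℕ) : cw 3 (n + 8) = 5847073 * cw (-8) n + 6117022 * cw (-7) n + 6840817 * cw (-6) n + 7479496 * cw (-5) n + 8081649 * cw (-4) n + 8642056 * cw (-3) n + 9160550 * cw (-2) n + 9615951 * cw (-1) n + 10147554 * cw 0 n + 9632063 * cw 1 n + 9189715 * cw 2 n + 8675697 * cw 3 n + 8108675 * cw 4 n + 7490784 * cw 5 n + 6832964 * cw 6 n + 6094263 * cw 7 n + 5822702 * cw 8 n := by
  rw [show n + 8 = (n + 7) + 1 from by omega, st_p3]
  simp only [L7_m5, L7_m4, L7_m3, L7_m2, L7_m1, L7_p0, L7_p1, L7_p5, L7_p6, L7_p7, L7_p8]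
  ring

lemma L8_p4 (n : ℕ) : cw 4 (n + 8) = 5465386 * cw (-8) n + 5720822 * cw (-7) n + 6400830 * cw (-6) n + 6999358 * cw (-5) n + 7561063 * cw (-4) n + 8081649 * cw (-3) n + 8562423 * cw (-2) n + 8984951 * cw (-1) n + 9480202 * cw 0 n + 8997799 * cw 1 n + 8585753 * cw 2 n + 8108675 * cw 3 n + 7582843 * cw 4 n + 7008498 * cw 5 n + 6394632 * cw 6 n + 5702744 * cw 7 n + 5446148 * cw 8 n := by
  rw [show n + 8 = (n + 7) + 1 from by omega, st_p4]
  simp only [L7_m4, L7_m3, L7_m2, L7_m1, L7_p0, L7_p1, L7_p2, L7_p6, L7_p7, L7_p8]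
  ring

lemma L8_p5 (n : ℕ) : cw 5 (n + 8) = 5048934 * cw (-8) n + 5287433 * cw (-7) n + 5920746 * cw (-6) n + 6478243 * cw (-5) n + 6999358 * cw (-4) n + 7479496 * cw (-3) n + 7920516 * cw (-2) n + 8306890 * cw (-1) n + 8761160 * cw 0 n + 8312369 * cw 1 n + 7930330 * cw 2 n + 7490784 * cw 3 n + 7008498 * cw 4 n + 6482294 * cw 5 n + 5918574 * cw 6 n + 5280282 * cw 7 n + 5041369 * cw 8 n := by
  rw [show n + 8 = (n + 7) + 1 from by omega, st_p5]
  simp only [L7_m3, L7_m2, L7_m1, L7_p0, L7_p1, L7_p2, L7_p3, L7_p7, L7_p8]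
  ring

lemma L8_p6 (n : ℕ) : cw 6 (n + 8) = 4604992 * cw (-8) n + 4823691 * cw (-7) n + 5406358 * cw (-6) n + 5920746 * cw (-5) n + 6400830 * cw (-4) n + 6840817 * cw (-3) n + 7241935 * cw (-2) n + 7590863 * cw (-1) n + 8001319 * cw 0 n + 7587265 * cw 1 n + 7235207 * cw 2 n + 6832964 * cw 3 n + 6394632 * cw 4 n + 5918574 * cw 5 n + 5409012 * cw 6 n + 4829837 * cw 7 n + 4611709 * cw 8 n := by
  rw [show n + 8 = (n + 7) + 1 from by omega, st_p6]
  simp only [L7_m2, L7_m1, L7_p0, L7_p1, L7_p2, L7_p3, L7_p4, L7_p8]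
  ring

lemma L8_p7 (n : ℕ) : cw 7 (n + 8) = 4106225 * cw (-8) n + 4300816 * cw (-7) n + 4823691 * cw (-6) n + 5287433 * cw (-5) n + 5720822 * cw (-4) n + 6117022 * cw (-3) n + 6475841 * cw (-2) n + 6785304 * cw (-1) n + 7148201 * cw 0 n + 6774363 * cw 1 n + 6455997 * cw 2 n + 6094263 * cw 3 n + 5702744 * cw 4 n + 5280282 * cw 5 n + 4829837 * cw 6 n + 4317223 * cw 7 n + 4124111 * cw 8 n := by
  rw [show n + 8 = (n + 7) + 1 from by omega, st_p7]
  simp only [L7_m1, L7_p0, L7_p1, L7_p2, L7_p3, L7_p4, L7_p5]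
  ring

lemma L8_p8 (n : ℕ) : cw 8 (n + 8) = 3922235 * cw (-8) n + 4106225 * cw (-7) n + 4604992 * cw (-6) n + 5048934 * cw (-5) n + 5465386 * cw (-4) n + 5847073 * cw (-3) n + 6192706 * cw (-2) n + 6489828 * cw (-1) n + 6836476 * cw 0 n + 6477911 * cw 1 n + 6171253 * cw 2 n + 5822702 * cw 3 n + 5446148 * cw 4 n + 5041369 * cw 5 n + 4611709 * cw 6 n + 4124111 * cw 7 n + 3941949 * cw 8 n := by
  rw [show n + 8 = (n + 7) + 1 from by omega, st_p8]
  simp only [L7_p0, L7_p1, L7_p2, L7_p3, L7_p4, L7_p5, L7_p6]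
  ring

lemma L9_p0 (n : ℕ) : cw 0 (n + 9) = 70346792 * cw (-8) n + 73636307 * cw (-7) n + 82471304 * cw (-6) n + 90286857 * cw (-5) n + 97620824 * cw (-4) n + 104383463 * cw (-3) n + 110574150 * cw (-2) n + 115963863 * cw (-1) n + 122269186 * cw 0 n + 115963863 * cw 1 n + 110574150 * cw 2 n + 104383463 * cw 3 n + 97620824 * cw 4 n + 90286857 * cw 5 n + 82471304 * cw 6 n + 73636307 * cw 7 n + 70346792 * cw 8 n := by
  rw [show n + 9 = (n + 8) + 1 from by omega, st_p0]
  simp only [L8_m8, L8_m7, L8_m6, L8_m5, L8_m4, L8_m3, L8_m2, L8_p2, L8_p3, L8_p4, L8_p5, L8_p6, L8_p7, L8_p8]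
  ring

lemma val0 : cw 0 0 = 1 := cw_zero 0 (by norm_num) (by norm_num)

lemma val1 : cw 0 1 = 14 := by
  have h := st_p0 0
  norm_num [cw_zero] at h
  exact h

lemma val2 : cw 0 2 = 128 := by
  have h := L2_p0 0
  norm_num [cw_zero] at h
  exact h

lemma val3 : cw 0 3 = 1378 := by
  have h := L3_p0 0
  norm_num [cw_zero] at h
  exact h

lemma val4 : cw 0 4 = 13932 := by
  have h := L4_p0 0
  norm_num [cw_zero] at h
  exact h

lemma val5 : cw 0 5 = 144300 := by
  have h := L5_p0 0
  norm_num [cw_zero] at h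
  exact h

lemma val6 : cw 0 6 = 1480376 := by
  have h := L6_p0 0
  norm_num [cw_zero] at h
  exact h

lemma val7 : cw 0 7 = 15245184 := by
  have h := L7_p0 0
  norm_num [cw_zero] at h
  exact h

lemma val8 : cw 0 8 = 156756896 := by
  have h := L8_p0 0
  norm_num [cw_zero] at h
  exact h

noncomputable def aseq : ℕ → ℤ := fun n => (cw 0 n : ℤ)

set_option maxHeartbeats 4000000 in
lemma recA (n : ℕ) : aseq (n + 9) = 4 * aseq (n + 8) + 59 * aseq (n + 7)
    + 77 * aseq (n + 6) - 170 * aseq (n + 5) - 234 * aseq (n + 4) + 92 * aseq (n + 3)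
    + 142 * aseq (n + 2) + 4 * aseq (n + 1) - 6 * aseq n := by
  unfold aseq
  rw [L9_p0 n, L8_p0 n, L7_p0 n, L6_p0 n, L5_p0 n, L4_p0 n, L3_p0 n, L2_p0 n, st_p0 n]
  push_cast
  ring

lemma mem_step_iff (x : ℤ) : (2 ≤ |x| ∧ |x| ≤ 8) ↔ x ∈ stepSet := by
  simp only [stepSet, Finset.mem_insert, Finset.mem_singleton, le_abs, abs_le]
  omega

lemma gf_eq : closeGameGF = PowerSeries.mk aseq := by
  ext n
  simp only [closeGameGF, coeff_mk, aseq]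
  congr 1
  rw [cw]
  apply Nat.card_congr
  apply Equiv.subtypeEquivRight
  intro l
  unfold Ok
  constructor
  · rintro ⟨h1, h2, h3⟩
    exact ⟨h1, fun x hx => (mem_step_iff x).mp (h2 x hx), fun i => by have := h3 i; omega⟩
  · rintro ⟨h1, h2, h3⟩
    exact ⟨h1, fun x hx => (mem_step_iff x).mpr (h2 x hx), fun i => by have := h3 i; omega⟩

lemma Pform : (1 - 4 * X - 59 * X ^ 2 - 77 * X ^ 3 + 170 * X ^ 4 + 234 * X ^ 5
    - 92 * X ^ 6 - 142 * X ^ 7 - 4 * X ^ 8 + 6 * X ^ 9 : PowerSeries ℤ)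
    = C 1 * X ^ 0 + C (-4) * X ^ 1 + C (-59) * X ^ 2 + C (-77) * X ^ 3
      + C 170 * X ^ 4 + C 234 * X ^ 5 + C (-92) * X ^ 6 + C (-142) * X ^ 7
      + C (-4) * X ^ 8 + C 6 * X ^ 9 := by
  simp only [map_neg, map_ofNat, map_one]
  ring

lemma Qform : (1 + 10 * X + 13 * X ^ 2 - 37 * X ^ 3 - 40 * X ^ 4 + 28 * X ^ 5
    + 26 * X ^ 6 - 2 * X ^ 7 : PowerSeries ℤ)
    = C 1 * X ^ 0 + C 10 * X ^ 1 + C 13 * X ^ 2 + C (-37) * X ^ 3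
      + C (-40) * X ^ 4 + C 28 * X ^ 5 + C 26 * X ^ 6 + C (-2) * X ^ 7 := by
  simp only [map_neg, map_ofNat, map_one]
  ring

lemma coeff_term (n i : ℕ) (co : ℤ) :
    (coeff n) (PowerSeries.mk aseq * (C co * X ^ i))
      = if i ≤ n then co * aseq (n - i) else 0 := by
  rw [show PowerSeries.mk aseq * (C co * X ^ i)
      = (PowerSeries.mk aseq * C co) * X ^ i by ring,
    PowerSeries.coeff_mul_X_pow']
  split_ifs with h
  · rw [PowerSeries.coeff_mul_C, coeff_mk]; ring
  · rfl

lemma coeff_Cpow (n i : ℕ) (co : ℤ) :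
    (coeff n) (C co * X ^ i) = if n = i then co else 0 := by
  rw [PowerSeries.coeff_C_mul, PowerSeries.coeff_X_pow, mul_ite, mul_one, mul_zero]

theorem closeGame_gf :
    closeGameGF *
      (1 - 4 * X - 59 * X ^ 2 - 77 * X ^ 3 + 170 * X ^ 4 + 234 * X ^ 5
        - 92 * X ^ 6 - 142 * X ^ 7 - 4 * X ^ 8 + 6 * X ^ 9)
      = 1 + 10 * X + 13 * X ^ 2 - 37 * X ^ 3 - 40 * X ^ 4 + 28 * X ^ 5
        + 26 * X ^ 6 - 2 * X ^ 7 := by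
  rw [gf_eq, Pform, Qform]
  ext n
  simp only [mul_add, map_add, coeff_term, coeff_Cpow]
  by_cases hn : n ≤ 8
  · interval_cases n <;>
      norm_num [aseq, val0, val1, val2, val3, val4, val5, val6, val7, val8]
  · obtain ⟨m, rfl⟩ : ∃ m, n = m + 9 := ⟨n - 9, by omega⟩
    rw [if_pos (show 0 ≤ m + 9 by omega), if_pos (show 1 ≤ m + 9 by omega),
      if_pos (show 2 ≤ m + 9 by omega), if_pos (show 3 ≤ m + 9 by omega),
      if_pos (show 4 ≤ m + 9 by omega), if_pos (show 5 ≤ m + 9 by omega),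
      if_pos (show 6 ≤ m + 9 by omega), if_pos (show 7 ≤ m + 9 by omega),
      if_pos (show 8 ≤ m + 9 by omega), if_pos (show 9 ≤ m + 9 by omega),
      if_neg (show ¬ m + 9 = 0 by omega), if_neg (show ¬ m + 9 = 1 by omega),
      if_neg (show ¬ m + 9 = 2 by omega), if_neg (show ¬ m + 9 = 3 by omega),
      if_neg (show ¬ m + 9 = 4 by omega), if_neg (show ¬ m + 9 = 5 by omega),
      if_neg (show ¬ m + 9 = 6 by omega), if_neg (show ¬ m + 9 = 7 by omega),
      show m + 9 - 0 = m + 9 by omega, show m + 9 - 1 = m + 8 by omega,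
      show m + 9 - 2 = m + 7 by omega, show m + 9 - 3 = m + 6 by omega,
      show m + 9 - 4 = m + 5 by omega, show m + 9 - 5 = m + 4 by omega,
      show m + 9 - 6 = m + 3 by omega, show m + 9 - 7 = m + 2 by omega,
      show m + 9 - 8 = m + 1 by omega, show m + 9 - 9 = m by omega]
    linarith [recA m]
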